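/- arXiv:1303.2227 — 7 statements merged into one kernel-verified Lean document; each statement's English description precedes it below -/
import Mathlib

section
/- For all integers n ≥ 1 and 0 ≤ l ≤ n, we have 2·∑_{k=l+1}^{n} k·C(n,k)/C(n+k,k) = n·C(n-1,l)/C(n+l,l) = (n-l)·C(n,l)/C(n+l,l), where C(a,b) denotes the binomial coefficient. -/
open Finset

/-- Sign factor for an alternating multiple harmonic sum entry. -/
def aSgn (s : ℤ) : ℚ := if 0 < s then 1 else -1

/-- Alternating multiple harmonic sum `H_n(s₁,…,s_ℓ)` (strict indices). -/
def Hh : ℕ → List ℤ → ℚ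
  | _, [] => 1
  | n, s :: r => ∑ k ∈ Finset.Icc 1 n, aSgn s ^ k / (k : ℚ) ^ s.natAbs * Hh (k - 1) r

/-- Alternating multiple harmonic star sum `H*_n(s₁,…,s_ℓ)` (weak indices). -/
def Hstar : ℕ → List ℤ → ℚ
  | _, [] => 1
  | n, s :: r => ∑ k ∈ Finset.Icc 1 n, aSgn s ^ k / (k : ℚ) ^ s.natAbs * Hstar k r

/-- All compositions (ordered tuples of positive integers) of `w`. -/
def comps : ℕ → List (List ℕ)
  | 0 => [[]]
  | (w+1) => (List.range (w+1)).flatMap (fun j => (comps (w - j)).map (fun l => (j+1) :: l))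
decreasing_by simp_wf <;> omega

/-- Coerce a list of naturals to a list of integers. -/
def natList (l : List ℕ) : List ℤ := l.map (fun m => (m : ℤ))


lemma tele (g : ℕ → ℚ) (l n : ℕ) (h : l ≤ n) :
    ∑ k ∈ Finset.Icc (l+1) n, (g (k-1) - g k) = g l - g n := by
  induction n, h using Nat.le_induction with
  | base => simp
  | succ n hn ih =>
      rw [Finset.sum_Icc_succ_top (by omega : l + 1 ≤ n + 1), ih]
      simp

lemma term (n j : ℕ) (hn : 1 ≤ n) (hj : j + 1 ≤ n) :
    2 * ((↑(j+1) : ℚ) * (n.choose (j+1)) / ((n+(j+1)).choose (j+1)))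
      = (n : ℚ) * ((n-1).choose j) / ((n+j).choose j)
        - (n : ℚ) * ((n-1).choose (j+1)) / ((n+(j+1)).choose (j+1)) := by
  have hA : ((n+j).choose j : ℚ) ≠ 0 := by
    exact_mod_cast (Nat.choose_pos (by omega)).ne'
  have hB : ((n+(j+1)).choose (j+1) : ℚ) ≠ 0 := by
    exact_mod_cast (Nat.choose_pos (by omega)).ne'
  have F1 : ((n+(j+1)).choose (j+1) : ℚ) * (j+1) = ((n:ℚ)+j+1) * ((n+j).choose j) := by
    have h := (Nat.add_one_mul_choose_eq (n+j) j).symm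
    rw [show n + (j+1) = n+j+1 by ring]
    exact_mod_cast h
  have F2 : (n : ℚ) * ((n-1).choose j) = (n.choose (j+1)) * (j+1) := by
    have h := Nat.add_one_mul_choose_eq (n-1) j
    simp only [Nat.succ_eq_add_one, show n - 1 + 1 = n by omega] at h
    exact_mod_cast h
  have F3 : (n.choose (j+1) : ℚ) = ((n-1).choose j) + ((n-1).choose (j+1)) := by
    have h : n.choose (j+1) = (n-1).choose j + (n-1).choose (j+1) := by
      conv_lhs => rw [show n = (n-1)+1 by omega]
      exact Nat.choose_succ_succ (n-1) j
    exact_mod_cast h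
  have B := ((n+(j+1)).choose (j+1) : ℚ)
  rw [div_sub_div _ _ hA hB, mul_div_assoc', div_eq_div_iff hB (mul_ne_zero hA hB)]
  simp only [Nat.cast_add, Nat.cast_one]
  linear_combination ((n+(j+1)).choose (j+1) : ℚ) * ((-(n.choose (j+1) : ℚ)) * F1
    + (-(((n+(j+1)).choose (j+1) : ℚ) + ((n+j).choose j : ℚ))) * F2
    + (-((n:ℚ) * ((n+j).choose j : ℚ))) * F3)

lemma numer (n l : ℕ) (hn : 1 ≤ n) (hl : l ≤ n) :
    (n : ℚ) * ((n-1).choose l) = ((n:ℚ) - l) * (n.choose l) := by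
  rcases Nat.eq_zero_or_pos l with h0 | h0
  · subst h0; simp
  · have F2 : (n : ℚ) * ((n-1).choose (l-1)) = (n.choose l) * l := by
      have h := Nat.add_one_mul_choose_eq (n-1) (l-1)
      simp only [Nat.succ_eq_add_one, show n - 1 + 1 = n by omega,
        show l - 1 + 1 = l by omega] at h
      exact_mod_cast h
    have F3 : (n.choose l : ℚ) = ((n-1).choose (l-1)) + ((n-1).choose l) := by
      have h : n.choose l = (n-1).choose (l-1) + (n-1).choose l := by
        conv_lhs => rw [show n = (n-1)+1 by omega, show l = (l-1)+1 by omega]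
        rw [Nat.choose_succ_succ' (n-1) (l-1), show l-1+1 = l by omega]
      exact_mod_cast h
    linear_combination (-(n:ℚ)) * F3 - F2

theorem stmt0 (n l : ℕ) (hn : 1 ≤ n) (hl : l ≤ n) :
    2 * ∑ k ∈ Finset.Icc (l+1) n, (k : ℚ) * (n.choose k) / ((n+k).choose k)
      = (n : ℚ) * ((n-1).choose l) / ((n+l).choose l) ∧
    (n : ℚ) * ((n-1).choose l) / ((n+l).choose l)
      = ((n : ℚ) - (l : ℚ)) * (n.choose l) / ((n+l).choose l) := by
  set g : ℕ → ℚ := fun k => (n : ℚ) * ((n-1).choose k) / ((n+k).choose k) with hg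
  constructor
  · have key : 2 * ∑ k ∈ Finset.Icc (l+1) n, (k : ℚ) * (n.choose k) / ((n+k).choose k)
        = ∑ k ∈ Finset.Icc (l+1) n, (g (k-1) - g k) := by
      rw [Finset.mul_sum]
      refine Finset.sum_congr rfl fun k hk => ?_
      simp only [Finset.mem_Icc] at hk
      have hk1 : k - 1 + 1 = k := by omega
      have := term n (k-1) hn (by omega)
      rw [hk1] at this
      rw [mul_div_assoc] at this ⊢
      rw [this, hg]
    rw [key, tele g l n hl, hg]
    simp [Nat.choose_eq_zero_of_lt (by omega : n - 1 < n)]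
  · rw [numer n l hn hl]
end

section
/- For all integers n ≥ 1, a ≥ 0, the multiple harmonic star sum H*_n({2}^a, 1) equals 2·∑_{k=1}^{n} C(n,k)/(k^{2a+1}·C(n+k,k)). -/
open Finset

/-! ### Cast identities for binomial coefficients -/

lemma cast_choose_succ (n k : ℕ) (hk : k ≤ n) :
    (((n+1).choose k : ℚ)) = (n.choose k : ℚ) * ((n:ℚ)+1) / ((n:ℚ) + 1 - k) := by
  have hne : (n:ℚ) + 1 - k ≠ 0 := by
    have : (k:ℚ) ≤ n := by exact_mod_cast hk
    intro h; nlinarith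
  rw [eq_div_iff hne]
  have h2 : ((n+1).choose k : ℚ) * (((n+1-k : ℕ)):ℚ) = (n.choose k:ℚ) * (((n+1 : ℕ)):ℚ) := by
    exact_mod_cast congrArg (Nat.cast : ℕ → ℚ) (Nat.choose_mul_succ_eq n k).symm
  rw [Nat.cast_sub (hk.trans (Nat.le_succ n))] at h2
  push_cast at h2 ⊢
  linarith

lemma cast_choose_add (n k : ℕ) :
    (((n+k+1).choose k : ℚ)) = ((n+k).choose k : ℚ) * ((n:ℚ)+k+1) / ((n:ℚ) + 1) := by
  have hne : (n:ℚ) + 1 ≠ 0 := by positivity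
  rw [eq_div_iff hne]
  have h := Nat.choose_mul_succ_eq (n+k) k
  have h2 : ((n+k+1).choose k : ℚ) * (((n+k+1-k : ℕ)):ℚ) = ((n+k).choose k:ℚ) * (((n+k+1 : ℕ)):ℚ) := by
    exact_mod_cast congrArg (Nat.cast : ℕ → ℚ) h.symm
  have h3 : n+k+1-k = n+1 := by omega
  rw [h3] at h2
  push_cast at h2 ⊢
  linarith

lemma cast_choose_right (n k : ℕ) (hk : k ≤ n) :
    ((n.choose (k+1) : ℚ)) = (n.choose k : ℚ) * ((n:ℚ) - k) / ((k:ℚ) + 1) := by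
  have hne : (k:ℚ) + 1 ≠ 0 := by positivity
  rw [eq_div_iff hne]
  have h2 : (n.choose (k+1) : ℚ) * (((k+1 : ℕ)):ℚ) = (n.choose k:ℚ) * (((n-k : ℕ)):ℚ) := by
    exact_mod_cast congrArg (Nat.cast : ℕ → ℚ) (Nat.choose_succ_right_eq n k)
  rw [Nat.cast_sub hk] at h2
  push_cast at h2 ⊢
  linarith

lemma cast_choose_diag (n k : ℕ) :
    (((n+k+1).choose (k+1) : ℚ)) = ((n+k).choose k : ℚ) * ((n:ℚ)+k+1) / ((k:ℚ) + 1) := by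
  have hne : (k:ℚ) + 1 ≠ 0 := by positivity
  rw [eq_div_iff hne]
  have h2 : (((n+k+1 : ℕ)):ℚ) * ((n+k).choose k : ℚ) = ((n+k+1).choose (k+1):ℚ) * (((k+1 : ℕ)):ℚ) := by
    exact_mod_cast congrArg (Nat.cast : ℕ → ℚ) (Nat.add_one_mul_choose_eq (n+k) k)
  push_cast at h2 ⊢
  linarith

lemma pe1 (n k : ℕ) (hk : k ≤ n) :
    ((n+1).choose k : ℚ) * ((n:ℚ)+1-k) = (n.choose k : ℚ) * ((n:ℚ)+1) := by
  have h2 : ((n+1).choose k : ℚ) * (((n+1-k : ℕ)):ℚ) = (n.choose k:ℚ) * (((n+1 : ℕ)):ℚ) := by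
    exact_mod_cast congrArg (Nat.cast : ℕ → ℚ) (Nat.choose_mul_succ_eq n k).symm
  rw [Nat.cast_sub (hk.trans (Nat.le_succ n))] at h2
  push_cast at h2 ⊢; linarith

lemma pe2 (n k : ℕ) :
    ((n+k+1).choose k : ℚ) * ((n:ℚ)+1) = ((n+k).choose k : ℚ) * ((n:ℚ)+k+1) := by
  have h := Nat.choose_mul_succ_eq (n+k) k
  have h3 : n+k+1-k = n+1 := by omega
  rw [h3] at h
  have h2 : ((n+k+1).choose k : ℚ) * (((n+1 : ℕ)):ℚ) = ((n+k).choose k:ℚ) * (((n+k+1 : ℕ)):ℚ) := by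
    exact_mod_cast congrArg (Nat.cast : ℕ → ℚ) h.symm
  push_cast at h2 ⊢; linarith

lemma pe3 (n k : ℕ) (hk : k ≤ n) :
    (n.choose (k+1) : ℚ) * ((k:ℚ)+1) = (n.choose k : ℚ) * ((n:ℚ)-k) := by
  have h2 : (n.choose (k+1) : ℚ) * (((k+1 : ℕ)):ℚ) = (n.choose k:ℚ) * (((n-k : ℕ)):ℚ) := by
    exact_mod_cast congrArg (Nat.cast : ℕ → ℚ) (Nat.choose_succ_right_eq n k)
  rw [Nat.cast_sub hk] at h2
  push_cast at h2 ⊢; linarith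

lemma pe4 (n k : ℕ) :
    ((n+k+1).choose (k+1) : ℚ) * ((k:ℚ)+1) = ((n+k).choose k : ℚ) * ((n:ℚ)+k+1) := by
  have h2 : (((n+k+1 : ℕ)):ℚ) * ((n+k).choose k : ℚ) = ((n+k+1).choose (k+1):ℚ) * (((k+1 : ℕ)):ℚ) := by
    exact_mod_cast congrArg (Nat.cast : ℕ → ℚ) (Nat.add_one_mul_choose_eq (n+k) k)
  push_cast at h2 ⊢; linarith

lemma choose_cast_ne (n k : ℕ) (h : k ≤ n) : ((n.choose k : ℚ)) ≠ 0 := by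
  exact_mod_cast (Nat.choose_pos h).ne'

/-! ### The key telescoping sum -/

lemma keyA (j : ℕ) (hj : 1 ≤ j) : ∀ n, j ≤ n →
    ∑ k ∈ Icc j n, (k.choose j : ℚ) / ((k:ℚ)^2 * ((k+j).choose j : ℚ))
      = (n.choose j : ℚ) / ((j:ℚ)^2 * ((n+j).choose j : ℚ)) := by
  intro n
  induction n with
  | zero => intro h; omega
  | succ n ih =>
    intro h
    rcases Nat.lt_or_ge n j with h1 | h1
    · have hje : j = n+1 := by omega
      subst hje
      rw [Icc_self, sum_singleton]
    · rw [← Finset.Ico_add_one_right_eq_Icc, Finset.sum_Ico_succ_top (by omega), Finset.Ico_add_one_right_eq_Icc, ih h1]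
      have hadd : n+1+j = n+j+1 := by omega
      rw [hadd, cast_choose_succ n j h1, cast_choose_add n j]
      have hjq : (1:ℚ) ≤ (j:ℚ) := by exact_mod_cast hj
      have hjn : (j:ℚ) ≤ (n:ℚ) := by exact_mod_cast h1
      have h1' : (n:ℚ) + 1 - j ≠ 0 := by intro hc; nlinarith
      have h2' : (n:ℚ) + 1 ≠ 0 := by positivity
      have h3' : (j:ℚ) ≠ 0 := by positivity
      have h4' : (n:ℚ) + j + 1 ≠ 0 := by positivity
      have h5' : ((n+j).choose j : ℚ) ≠ 0 := choose_cast_ne (n+j) j (by omega)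
      push_cast
      field_simp
      ring

/-! ### The harmonic number base case -/

noncomputable def tt (n k : ℕ) : ℚ := (n.choose k : ℚ) / ((k:ℚ) * ((n+k).choose k))

noncomputable def vv (n k : ℕ) : ℚ :=
  (n.choose k : ℚ) * ((n:ℚ)+k+1) / (2 * ((n+k).choose k) * ((n:ℚ)+1-k) * ((n:ℚ)+1+k))

lemma tt_succ (n k : ℕ) (hk1 : 1 ≤ k) (hk : k ≤ n) :
    tt (n+1) k = (n.choose k : ℚ) * ((n:ℚ)+1)^2
      / ((k:ℚ) * ((n+k).choose k) * ((n:ℚ)+1-k) * ((n:ℚ)+k+1)) := by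
  unfold tt
  have e1 : n+1+k = n+k+1 := by omega
  rw [e1]
  have hq2 : (k:ℚ) ≤ (n:ℚ) := by exact_mod_cast hk
  have h3' : (k:ℚ) ≠ 0 := by positivity
  have h1' : (n:ℚ) + 1 - k ≠ 0 := by intro hc; nlinarith
  have h4' : (n:ℚ) + k + 1 ≠ 0 := by positivity
  have hy : ((n+k).choose k : ℚ) ≠ 0 := choose_cast_ne (n+k) k (by omega)
  have hw : ((n+k+1).choose k : ℚ) ≠ 0 := choose_cast_ne (n+k+1) k (by omega)
  rw [div_eq_div_iff (by positivity) (by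
    apply mul_ne_zero; apply mul_ne_zero; apply mul_ne_zero h3' hy; exact h1'; exact h4')]
  linear_combination ((k:ℚ) * ((n+k).choose k) * ((n:ℚ)+k+1)) * pe1 n k hk
    - ((k:ℚ) * (n.choose k) * ((n:ℚ)+1)) * pe2 n k

lemma vv_succ (n k : ℕ) (hk1 : 1 ≤ k) (hk : k + 1 ≤ n) :
    vv n (k+1) = (n.choose k : ℚ) / (2 * ((n+k).choose k) * ((n:ℚ)+k+1)) := by
  unfold vv
  have e2 : n+(k+1) = n+k+1 := by omega
  rw [e2]
  have hq2 : (k:ℚ) + 1 ≤ (n:ℚ) := by exact_mod_cast hk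
  have hy : ((n+k).choose k : ℚ) ≠ 0 := choose_cast_ne (n+k) k (by omega)
  have hy' : ((n+k+1).choose (k+1) : ℚ) ≠ 0 := choose_cast_ne (n+k+1) (k+1) (by omega)
  have h4' : (n:ℚ) + k + 1 ≠ 0 := by positivity
  have hd2 : (n:ℚ) + 1 - (↑(k+1):ℚ) ≠ 0 := by push_cast; intro hc; nlinarith
  have hs2 : (n:ℚ) + 1 + (↑(k+1):ℚ) ≠ 0 := by positivity
  rw [div_eq_div_iff (by
      apply mul_ne_zero; apply mul_ne_zero; apply mul_ne_zero (by norm_num : (2:ℚ) ≠ 0) hy'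
      exact hd2; exact hs2)
    (by apply mul_ne_zero; apply mul_ne_zero (by norm_num : (2:ℚ) ≠ 0) hy; exact h4')]
  push_cast
  linear_combination (2*(((n+k+1).choose (k+1)):ℚ)*((n:ℚ)+k+2)) * pe3 n k (by omega)
    - (2*((n.choose (k+1)):ℚ)*((n:ℚ)+k+2)) * pe4 n k

lemma ptwise (n k : ℕ) (hk : 1 ≤ k) (hkn : k + 1 ≤ n) :
    tt (n+1) k - tt n k = vv n k - vv n (k+1) := by
  rw [tt_succ n k hk (by omega), vv_succ n k hk hkn]
  unfold tt vv
  have hq1 : (1:ℚ) ≤ (k:ℚ) := by exact_mod_cast hk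
  have hq2 : (k:ℚ) + 1 ≤ (n:ℚ) := by exact_mod_cast hkn
  have h1' : (n:ℚ) + 1 - k ≠ 0 := by intro hc; nlinarith
  have h3' : (k:ℚ) ≠ 0 := by positivity
  have h4' : (n:ℚ) + k + 1 ≠ 0 := by positivity
  have h4'' : (n:ℚ) + 1 + k ≠ 0 := by positivity
  have hy : ((n+k).choose k : ℚ) ≠ 0 := choose_cast_ne (n+k) k (by omega)
  field_simp
  ring

lemma v_one (n : ℕ) (hn : 1 ≤ n) : vv n 1 = 1 / (2*((n:ℚ)+1)) := by
  unfold vv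
  rw [Nat.choose_one_right]
  rw [Nat.choose_one_right]
  have hq : (1:ℚ) ≤ (n:ℚ) := by exact_mod_cast hn
  have h1 : (n:ℚ) ≠ 0 := by positivity
  have h2 : (n:ℚ) + 1 ≠ 0 := by positivity
  have h3 : (n:ℚ) + 1 - 1 ≠ 0 := by intro hc; nlinarith
  have h4 : (n:ℚ) + 1 + 1 ≠ 0 := by positivity
  push_cast
  field_simp
  ring

lemma edge (n : ℕ) (hn : 1 ≤ n) :
    tt (n+1) n + tt (n+1) (n+1) = tt n n + vv n n := by
  unfold tt vv
  have e1 : n+1+n = n+n+1 := by omega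
  have e2 : n+1+(n+1) = n+n+1+1 := by omega
  rw [e1, e2, Nat.choose_self, Nat.choose_self]
  rw [cast_choose_succ n n le_rfl, cast_choose_add n n]
  have e3 : n+n+1+1 = (n+1)+n+1 := by omega
  have e4 : (n+1)+n = n+n+1 := by omega
  rw [e3, cast_choose_diag (n+1) n, e4, cast_choose_add n n]
  have hq : (1:ℚ) ≤ (n:ℚ) := by exact_mod_cast hn
  have h1 : (n:ℚ) ≠ 0 := by positivity
  have h2 : (n:ℚ) + 1 ≠ 0 := by positivity
  have h3 : (n:ℚ) + 1 - n ≠ 0 := by intro hc; nlinarith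
  have h4 : (n:ℚ) + n + 1 ≠ 0 := by positivity
  have h5 : (n:ℚ) + 1 + n ≠ 0 := by positivity
  have h6 : ((n+n).choose n : ℚ) ≠ 0 := choose_cast_ne (n+n) n (by omega)
  push_cast [Nat.choose_self]
  field_simp
  ring

lemma tel (f : ℕ → ℚ) : ∀ m : ℕ, ∑ k ∈ Icc 1 m, (f k - f (k+1)) = f 1 - f (m+1)
  | 0 => by simp
  | (m+1) => by
    rw [← Finset.Ico_add_one_right_eq_Icc, Finset.sum_Ico_succ_top (by omega), Finset.Ico_add_one_right_eq_Icc, tel f m]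
    ring

lemma sumstep (m : ℕ) :
    ∑ k ∈ Icc 1 (m+2), tt (m+2) k
      = ∑ k ∈ Icc 1 (m+1), tt (m+1) k + 1/(2*((m:ℚ)+2)) := by
  rw [← Finset.Ico_add_one_right_eq_Icc, Finset.sum_Ico_succ_top (by omega), Finset.sum_Ico_succ_top (by omega),
    Finset.Ico_add_one_right_eq_Icc]
  rw [show (Icc 1 (m+1) : Finset ℕ) = Ico 1 (m+2) from (Finset.Ico_add_one_right_eq_Icc 1 (m+1)).symm,
    Finset.sum_Ico_succ_top (by omega), Finset.Ico_add_one_right_eq_Icc]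
  have hsum : ∑ k ∈ Icc 1 m, tt (m+2) k
      = ∑ k ∈ Icc 1 m, (tt (m+1) k + (vv (m+1) k - vv (m+1) (k+1))) := by
    refine Finset.sum_congr rfl (fun k hk => ?_)
    rw [Finset.mem_Icc] at hk
    have := ptwise (m+1) k hk.1 (by omega)
    linarith
  rw [hsum, Finset.sum_add_distrib, tel]
  have he := edge (m+1) (by omega)
  have hv := v_one (m+1) (by omega)
  have e : m+1+1 = m+2 := by omega
  rw [e] at he
  rw [hv]
  have e2 : ((m+1 : ℕ) : ℚ) + 1 = (m:ℚ) + 2 := by push_cast; ring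
  rw [e2]
  linarith

lemma baseH : ∀ n : ℕ, ∑ k ∈ Icc 1 n, (1:ℚ)/k = 2 * ∑ k ∈ Icc 1 n, tt n k
  | 0 => by simp
  | 1 => by
    rw [Icc_self, sum_singleton, sum_singleton]
    unfold tt
    norm_num
  | (m+2) => by
    have ih := baseH (m+1)
    rw [Finset.sum_Icc_succ_top (by omega : 1 ≤ m+1+1), ih, sumstep m]
    have h2 : (m:ℚ)+2 ≠ 0 := by positivity
    push_cast
    field_simp
    ring

/-! ### Summation interchange -/

lemma swapsum (n : ℕ) (f : ℕ → ℕ → ℚ) :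
    ∑ k ∈ Icc 1 n, ∑ j ∈ Icc 1 k, f j k = ∑ j ∈ Icc 1 n, ∑ k ∈ Icc j n, f j k := by
  have h := Finset.sum_Ico_Ico_comm 1 (n+1) f
  simp only [← Finset.Ico_add_one_right_eq_Icc]
  exact h.symm

/-! ### Main theorem -/

lemma hstar_one (n : ℕ) : Hstar n [1] = ∑ k ∈ Icc 1 n, (1:ℚ)/k := by
  simp [Hstar, aSgn]

lemma hstar_two (n : ℕ) (r : List ℤ) :
    Hstar n (2 :: r) = ∑ k ∈ Icc 1 n, (1:ℚ)/(k:ℚ)^2 * Hstar k r := by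
  simp [Hstar, aSgn]

lemma main_id : ∀ (a : ℕ) (n : ℕ),
    Hstar n (List.replicate a 2 ++ [1])
      = 2 * ∑ k ∈ Icc 1 n, (n.choose k : ℚ) / ((k : ℚ) ^ (2*a+1) * ((n+k).choose k)) := by
  intro a
  induction a with
  | zero =>
    intro n
    rw [List.replicate_zero, List.nil_append, hstar_one, baseH]
    congr 1
    refine Finset.sum_congr rfl (fun k _ => ?_)
    unfold tt
    norm_num
  | succ a ih =>
    intro n
    rw [List.replicate_succ, List.cons_append, hstar_two]
    have step1 : ∑ k ∈ Icc 1 n, (1:ℚ)/(k:ℚ)^2 * Hstar k (List.replicate a 2 ++ [1])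
        = ∑ k ∈ Icc 1 n, ∑ j ∈ Icc 1 k,
            2 * ((k.choose j : ℚ) / ((j:ℚ)^(2*a+1) * ((k:ℚ)^2 * ((k+j).choose j)))) := by
      refine Finset.sum_congr rfl (fun k hk => ?_)
      rw [ih k, Finset.mul_sum, Finset.mul_sum]
      refine Finset.sum_congr rfl (fun j hj => ?_)
      rw [Finset.mem_Icc] at hk hj
      have hk0 : (k:ℚ) ≠ 0 := by
        have : (1:ℚ) ≤ (k:ℚ) := by exact_mod_cast hk.1
        positivity
      field_simp
    rw [step1, swapsum n (fun j k =>
      2 * ((k.choose j : ℚ) / ((j:ℚ)^(2*a+1) * ((k:ℚ)^2 * ((k+j).choose j)))))]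
    rw [Finset.mul_sum]
    refine Finset.sum_congr rfl (fun j hj => ?_)
    rw [Finset.mem_Icc] at hj
    have hj0 : (j:ℚ) ≠ 0 := by
      have : (1:ℚ) ≤ (j:ℚ) := by exact_mod_cast hj.1
      positivity
    have hkey := keyA j hj.1 n hj.2
    calc ∑ k ∈ Icc j n,
          2 * ((k.choose j : ℚ) / ((j:ℚ)^(2*a+1) * ((k:ℚ)^2 * ((k+j).choose j))))
        = (2 / (j:ℚ)^(2*a+1)) * ∑ k ∈ Icc j n,
            (k.choose j : ℚ) / ((k:ℚ)^2 * ((k+j).choose j)) := by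
          rw [Finset.mul_sum]
          refine Finset.sum_congr rfl (fun k _ => ?_)
          field_simp
      _ = (2 / (j:ℚ)^(2*a+1)) * ((n.choose j : ℚ) / ((j:ℚ)^2 * ((n+j).choose j))) := by
          rw [hkey]
      _ = 2 * ((n.choose j : ℚ) / ((j:ℚ)^(2*(a+1)+1) * ((n+j).choose j))) := by
          have hexp : 2*(a+1)+1 = (2*a+1)+2 := by omega
          rw [hexp, pow_add]
          field_simp
          ring

theorem stmt1 (n a : ℕ) (hn : 1 ≤ n) :
    Hstar n (List.replicate a 2 ++ [1])
      = 2 * ∑ k ∈ Finset.Icc 1 n,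
          (n.choose k : ℚ) / ((k : ℚ) ^ (2*a+1) * ((n+k).choose k)) := by
  exact main_id a n
end

section
/- For all integers n ≥ 1 and a, b ≥ 0, H*_n({2}^a, 1, {2}^b, 1) = 2·∑_{k=1}^{n} C(n,k)/(k^{2(a+b)+2}·C(n+k,k)) + 4·∑_{k=1}^{n} H_{k-1}(2b+1)·C(n,k)/(k^{2a+1}·C(n+k,k)), where H_{k-1}(2b+1) = ∑_{j=1}^{k-1} 1/j^{2b+1}. -/
open Finset

/-! ### Auxiliary development -/

/-- The basic binomial ratio `C(n,k)/C(n+k,k)`. -/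
def cc (n k : ℕ) : ℚ := (n.choose k : ℚ) / ((n+k).choose k : ℚ)

lemma cc_zero {n k : ℕ} (h : n < k) : cc n k = 0 := by
  simp [cc, Nat.choose_eq_zero_of_lt h]

lemma chooseQ_ne (n k : ℕ) : ((n+k).choose k : ℚ) ≠ 0 := by
  have := Nat.choose_pos (show k ≤ n + k by omega)
  positivity

lemma cc_succ_right {n k : ℕ} (h : k ≤ n) :
    cc n (k+1) = cc n k * (((n:ℚ)-k) / ((n:ℚ)+k+1)) := by
  have hk1 : ((k:ℚ)+1) ≠ 0 := Nat.cast_add_one_ne_zero k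
  have h1 : (n.choose (k+1) : ℚ) * ((k:ℚ)+1) = (n.choose k : ℚ) * ((n:ℚ) - k) := by
    have h2 := congrArg (fun x : ℕ => (x:ℚ)) (Nat.choose_succ_right_eq n k)
    push_cast [h] at h2
    linarith
  have h3 : ((n+(k+1)).choose (k+1) : ℚ) * ((k:ℚ)+1) = ((n+k).choose k : ℚ) * ((n:ℚ)+k+1) := by
    have h4 := congrArg (fun x : ℕ => (x:ℚ)) (Nat.add_one_mul_choose_eq (n+k) k)
    push_cast at h4
    have he : n + (k+1) = n + k + 1 := by omega
    rw [he]
    linarith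
  have d2 := chooseQ_ne n k
  have d3 := chooseQ_ne n (k+1)
  have hnk : ((n:ℚ)+k+1) ≠ 0 := by positivity
  have e1 : (n.choose (k+1) : ℚ) = (n.choose k : ℚ) * ((n:ℚ)-k) / ((k:ℚ)+1) := by
    rw [eq_div_iff hk1]; linarith
  have e2 : ((n+(k+1)).choose (k+1) : ℚ)
      = ((n+k).choose k : ℚ) * ((n:ℚ)+k+1) / ((k:ℚ)+1) := by
    rw [eq_div_iff hk1]; linarith
  unfold cc
  rw [e1, e2]
  field_simp

lemma cc_succ_left {n k : ℕ} (h : k ≤ n) :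
    cc n k = cc (n+1) k * ((((n:ℚ)+1-k) * ((n:ℚ)+1+k)) / ((n:ℚ)+1)^2) := by
  have h1 : (n.choose k : ℚ) * ((n:ℚ) + 1) = ((n+1).choose k : ℚ) * ((n:ℚ)+1-k) := by
    have h2 := congrArg (fun x : ℕ => (x:ℚ)) (Nat.choose_mul_succ_eq n k)
    push_cast [show k ≤ n + 1 by omega] at h2
    linarith
  have h3 : ((n+k).choose k : ℚ) * ((n:ℚ)+k+1) = ((n+1+k).choose k : ℚ) * ((n:ℚ)+1) := by
    have h4 := congrArg (fun x : ℕ => (x:ℚ)) (Nat.choose_mul_succ_eq (n+k) k)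
    push_cast [show k ≤ n + k + 1 by omega] at h4
    have he : n + 1 + k = n + k + 1 := by omega
    rw [he]
    linarith
  have d1 := chooseQ_ne (n+1) k
  have d2 := chooseQ_ne n k
  have hn1 : ((n:ℚ)+1) ≠ 0 := by positivity
  unfold cc
  rw [div_mul_div_comm, div_eq_div_iff d2 (mul_ne_zero d1 (by positivity))]
  linear_combination (((n:ℚ)+1+k) * ((n+k).choose k : ℚ)) * h1
    - ((n.choose k : ℚ) * ((n:ℚ)+1)) * h3

lemma cc_diff {n k : ℕ} (h2 : k ≤ n+1) :
    cc (n+1) k - cc n k = cc (n+1) k * (k:ℚ)^2 / ((n:ℚ)+1)^2 := by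
  have hn1 : ((n:ℚ)+1) ≠ 0 := by positivity
  rcases Nat.lt_or_ge n k with h | h
  · have hk : k = n+1 := by omega
    subst hk
    rw [cc_zero (show n < n+1 by omega)]
    push_cast
    field_simp
    simp
  · rw [cc_succ_left h]
    field_simp
    ring

lemma sumT2 (n : ℕ) {k : ℕ} (hk : 1 ≤ k) :
    ∑ m ∈ Icc 1 n, cc m k / (m:ℚ)^2 = cc n k / (k:ℚ)^2 := by
  induction n with
  | zero => simp [cc_zero (show 0 < k from hk)]
  | succ n ih =>
    rw [Finset.sum_Icc_succ_top (by omega), ih]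
    rcases Nat.lt_or_ge (n+1) k with h | h
    · rw [cc_zero h, cc_zero (by omega)]
      simp
    · have hd := cc_diff (n := n) (k := k) h
      have hk0 : ((k:ℚ))^2 ≠ 0 := by
        have : (0:ℚ) < k := by exact_mod_cast hk
        positivity
      have hn1 : ((n:ℚ)+1)^2 ≠ 0 := by positivity
      have : ((n:ℚ)+1) = ((n+1 : ℕ) : ℚ) := by push_cast; ring
      rw [← this]
      field_simp at hd ⊢
      nlinarith [hd]

/-- Generic telescoping over `Icc 1 N`. -/
lemma telescope (t : ℕ → ℚ) (N : ℕ) :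
    ∑ k ∈ Icc 1 N, (t k - t (k+1)) = t 1 - t (N+1) := by
  induction N with
  | zero => simp
  | succ N ih => rw [Finset.sum_Icc_succ_top (by omega), ih]; ring

lemma sumKc (N : ℕ) : ∑ k ∈ Icc 1 N, (k:ℚ) * cc N k = (N:ℚ)/2 := by
  have key : ∀ k ∈ Icc 1 N, (k:ℚ) * cc N k
      = (((k:ℚ)+N)/2 * cc N k) - ((((k+1:ℕ):ℚ)+N)/2 * cc N (k+1)) := by
    intro k hk
    simp only [Finset.mem_Icc] at hk
    have h := cc_succ_right (n := N) (k := k) hk.2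
    have hne : ((N:ℚ)+k+1) ≠ 0 := by positivity
    rw [h]
    push_cast
    field_simp
    ring
  rw [Finset.sum_congr rfl key, telescope]
  rcases Nat.eq_zero_or_pos N with h | h
  · subst h; simp [cc]
  · rw [cc_zero (show N < N+1 by omega)]
    have h1 : cc N 1 = (N:ℚ)/((N:ℚ)+1) := by
      unfold cc
      rw [Nat.choose_one_right, Nat.choose_one_right]
      push_cast; ring_nf
    rw [h1]
    have : ((N:ℚ)+1) ≠ 0 := by positivity
    field_simp
    ring

lemma sumE (n : ℕ) : ∑ m ∈ Icc 1 n, (1:ℚ)/(m:ℚ) = 2 * ∑ k ∈ Icc 1 n, cc n k / (k:ℚ) := by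
  induction n with
  | zero => simp
  | succ n ih =>
    rw [Finset.sum_Icc_succ_top (show 1 ≤ n+1 by omega) (fun m => (1:ℚ)/(m:ℚ)), ih]
    have hext : ∑ k ∈ Icc 1 (n+1), cc n k / (k:ℚ) = ∑ k ∈ Icc 1 n, cc n k / (k:ℚ) := by
      rw [Finset.sum_Icc_succ_top (show 1 ≤ n+1 by omega),
        cc_zero (show n < n+1 by omega)]
      simp
    have hdiff : ∑ k ∈ Icc 1 (n+1), cc (n+1) k / (k:ℚ) - ∑ k ∈ Icc 1 (n+1), cc n k / (k:ℚ)
        = ∑ k ∈ Icc 1 (n+1), (k:ℚ) * cc (n+1) k / ((n:ℚ)+1)^2 := by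
      rw [← Finset.sum_sub_distrib]
      apply Finset.sum_congr rfl
      intro k hk
      simp only [Finset.mem_Icc] at hk
      have hd := cc_diff (n := n) (k := k) hk.2
      have hk0 : ((k:ℚ)) ≠ 0 := by
        have : (0:ℚ) < k := by exact_mod_cast hk.1
        positivity
      have hn1 : ((n:ℚ)+1) ≠ 0 := by positivity
      rw [div_sub_div_same, hd]
      field_simp
    have hs := sumKc (n+1)
    push_cast at hs
    have hn1 : ((n:ℚ)+1) ≠ 0 := by positivity
    have hsum : ∑ k ∈ Icc 1 (n+1), (k:ℚ) * cc (n+1) k / ((n:ℚ)+1)^2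
        = (((n:ℚ)+1)/2) / ((n:ℚ)+1)^2 := by
      rw [← Finset.sum_div, hs]
    have hq : 2 * ((((n:ℚ)+1)/2) / ((n:ℚ)+1)^2) = 1/((n:ℚ)+1) := by
      field_simp
    push_cast
    linarith [hdiff, hsum, hq, hext]

/-- `G n j = cc n j / j + 2 ∑_{k=j+1}^n cc n k / k`. -/
noncomputable def G (n j : ℕ) : ℚ := cc n j / (j:ℚ) + 2 * ∑ k ∈ Icc (j+1) n, cc n k / (k:ℚ)

lemma G_of_big {n j : ℕ} (h : n < j) : G n j = 0 := by
  unfold G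
  rw [cc_zero h, Finset.Icc_eq_empty (by omega)]
  simp

lemma G_split (m j : ℕ) : G m j = cc m j / (j:ℚ) + cc m (j+1) / ((j:ℚ)+1) + G m (j+1) := by
  unfold G
  rcases Nat.lt_or_ge m (j+1) with h | h
  · rw [Finset.Icc_eq_empty (show ¬ (j+1 ≤ m) by omega), Finset.Icc_eq_empty (show ¬ (j+1+1 ≤ m) by omega),
      cc_zero (show m < j + 1 from h)]
    push_cast
    simp
  · rw [Finset.Icc_eq_cons_Ioc h, Finset.sum_cons, ← Finset.Icc_add_one_left_eq_Ioc]
    push_cast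
    ring

theorem stepG (n j : ℕ) (hj : 1 ≤ j) :
    G (n+1) j = G n j + cc (n+1) j / ((n:ℚ)+1) := by
  rcases Nat.lt_or_ge n j with h | h
  · rcases Nat.lt_or_ge (n+1) j with h2 | h2
    · rw [G_of_big h2, G_of_big (show n < j by omega), cc_zero h2]
      simp
    · have hj1 : j = n+1 := by omega
      subst hj1
      rw [show G n (n+1) = 0 from G_of_big (by omega)]
      unfold G
      rw [show Icc (n+1+1) (n+1) = ∅ from Finset.Icc_eq_empty (by omega)]
      push_cast
      simp
  · have ih := stepG n (j+1) (by omega)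
    have e1 := G_split (n+1) j
    have e2 := G_split n j
    have d1 := cc_diff (n := n) (k := j) (show j ≤ n+1 by omega)
    have d2 := cc_diff (n := n) (k := j+1) (show j+1 ≤ n+1 by omega)
    have r := cc_succ_right (n := n+1) (k := j) (show j ≤ n+1 by omega)
    have hn1 : ((n:ℚ)+1) ≠ 0 := by positivity
    have hj0 : ((j:ℚ)) ≠ 0 := by
      have : (0:ℚ) < j := by exact_mod_cast hj
      positivity
    have hj1 : ((j:ℚ)+1) ≠ 0 := by positivity
    have hd : ((n:ℚ)+1+((j:ℚ)+1)) ≠ 0 := by positivity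
    push_cast at d2 r e1 e2 ih ⊢
    have s1 : cc n j = cc (n+1) j - cc (n+1) j * (j:ℚ)^2 / ((n:ℚ)+1)^2 := by
      linarith [d1]
    have s2 : cc n (j+1) = cc (n+1) (j+1) - cc (n+1) (j+1) * ((j:ℚ)+1)^2 / ((n:ℚ)+1)^2 := by
      linarith [d2]
    rw [e1, e2, ih, s1, s2, r]
    field_simp
    ring
termination_by n + 2 - j

lemma sumT1 (n : ℕ) {j : ℕ} (hj : 1 ≤ j) :
    ∑ m ∈ Icc 1 n, cc m j / (m:ℚ) = G n j := by
  induction n with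
  | zero => rw [G_of_big (by omega)]; simp
  | succ n ih =>
    rw [Finset.sum_Icc_succ_top (by omega), ih, stepG n j hj]
    push_cast
    ring

lemma cc_extend (n m : ℕ) (hm : m ≤ n) (w : ℕ → ℚ) :
    ∑ k ∈ Icc 1 m, w k * cc m k = ∑ k ∈ Icc 1 n, w k * cc m k := by
  apply Finset.sum_subset (Finset.Icc_subset_Icc le_rfl hm)
  intro k hk hk2
  simp only [Finset.mem_Icc] at hk hk2
  rw [cc_zero (show m < k by omega), mul_zero]

lemma swap2 (n : ℕ) (w : ℕ → ℚ) :
    ∑ m ∈ Icc 1 n, (1/(m:ℚ)^2) * ∑ k ∈ Icc 1 m, w k * cc m k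
      = ∑ k ∈ Icc 1 n, (w k * cc n k) / (k:ℚ)^2 := by
  have h1 : ∀ m ∈ Icc 1 n, (1/(m:ℚ)^2) * ∑ k ∈ Icc 1 m, w k * cc m k
      = ∑ k ∈ Icc 1 n, w k * (cc m k / (m:ℚ)^2) := by
    intro m hm
    simp only [Finset.mem_Icc] at hm
    rw [cc_extend n m hm.2 w, Finset.mul_sum]
    exact Finset.sum_congr rfl (fun k _ => by ring)
  rw [Finset.sum_congr rfl h1, Finset.sum_comm]
  apply Finset.sum_congr rfl
  intro k hk
  simp only [Finset.mem_Icc] at hk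
  rw [← Finset.mul_sum, sumT2 n hk.1, mul_div_assoc]

lemma tri (n : ℕ) (f g : ℕ → ℚ) :
    ∑ j ∈ Icc 1 n, f j * ∑ k ∈ Icc (j+1) n, g k
      = ∑ k ∈ Icc 1 n, (∑ j ∈ Icc 1 (k-1), f j) * g k := by
  have h1 : ∀ j ∈ Icc 1 n, f j * ∑ k ∈ Icc (j+1) n, g k
      = ∑ k ∈ Icc 1 n, if j + 1 ≤ k then f j * g k else 0 := by
    intro j hj
    simp only [Finset.mem_Icc] at hj
    rw [show Icc (j+1) n = (Icc 1 n).filter (fun k => j + 1 ≤ k) by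
        ext k; simp only [Finset.mem_Icc, Finset.mem_filter]; omega,
      Finset.sum_filter, Finset.mul_sum]
    apply Finset.sum_congr rfl
    intro k _
    split <;> simp
  rw [Finset.sum_congr rfl h1, Finset.sum_comm]
  apply Finset.sum_congr rfl
  intro k hk
  simp only [Finset.mem_Icc] at hk
  rw [← Finset.sum_filter, show (Icc 1 n).filter (fun j => j + 1 ≤ k) = Icc 1 (k-1) by
      ext j; simp only [Finset.mem_Icc, Finset.mem_filter]; omega,
    ← Finset.sum_mul]

lemma aSgn_one : aSgn 1 = 1 := by simp [aSgn]

lemma aSgn_two : aSgn 2 = 1 := by simp [aSgn]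

lemma Hh_nil (m : ℕ) : Hh m [] = 1 := by rw [Hh]

lemma Hh_single (m b : ℕ) :
    Hh m [2*(b:ℤ)+1] = ∑ j ∈ Icc 1 m, (1:ℚ)/(j:ℚ)^(2*b+1) := by
  have hs : aSgn (2*(b:ℤ)+1) = 1 := by
    unfold aSgn
    rw [if_pos (by positivity)]
  have hn : (2*(b:ℤ)+1).natAbs = 2*b+1 := by omega
  rw [Hh]
  apply Finset.sum_congr rfl
  intro j _
  rw [hs, hn, Hh_nil, one_pow, mul_one, one_div, inv_eq_one_div]

lemma hstar21 (b : ℕ) : ∀ n : ℕ, Hstar n (List.replicate b 2 ++ [1])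
    = 2 * ∑ k ∈ Icc 1 n, cc n k / (k:ℚ)^(2*b+1) := by
  induction b with
  | zero =>
    intro n
    simp only [List.replicate_zero, List.nil_append]
    rw [Hstar]
    have h1 : ∀ k ∈ Icc 1 n, aSgn 1 ^ k / (k:ℚ) ^ (1:ℤ).natAbs * Hstar k []
        = (1:ℚ)/(k:ℚ) := by
      intro k _
      rw [aSgn_one, one_pow, show (1:ℤ).natAbs = 1 from rfl, pow_one, show Hstar k [] = 1 from rfl,
        mul_one]
    rw [Finset.sum_congr rfl h1, sumE n]
    congr 1
    apply Finset.sum_congr rfl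
    intro k _
    norm_num
  | succ b ih =>
    intro n
    rw [show List.replicate (b+1) 2 ++ [1] = (2:ℤ) :: (List.replicate b 2 ++ [1]) by
      simp [List.replicate_succ]]
    rw [Hstar]
    have h1 : ∀ m ∈ Icc 1 n, aSgn 2 ^ m / (m:ℚ) ^ (2:ℤ).natAbs * Hstar m (List.replicate b 2 ++ [1])
        = (1/(m:ℚ)^2) * ∑ k ∈ Icc 1 n, (2/(k:ℚ)^(2*b+1)) * cc m k := by
      intro m hm
      simp only [Finset.mem_Icc] at hm
      rw [aSgn_two, one_pow, show (2:ℤ).natAbs = 2 from rfl, ih m]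
      rw [show ∑ k ∈ Icc 1 m, cc m k / (k:ℚ)^(2*b+1)
          = ∑ k ∈ Icc 1 m, (1/(k:ℚ)^(2*b+1)) * cc m k from
        Finset.sum_congr rfl (fun k _ => by ring)]
      rw [cc_extend n m hm.2, Finset.mul_sum, Finset.mul_sum, Finset.mul_sum]
      apply Finset.sum_congr rfl
      intro k _
      ring
    rw [Finset.sum_congr rfl h1]
    have h2 : ∀ m ∈ Icc 1 n, (1/(m:ℚ)^2) * ∑ k ∈ Icc 1 n, (2/(k:ℚ)^(2*b+1)) * cc m k
        = (1/(m:ℚ)^2) * ∑ k ∈ Icc 1 m, (fun k => 2/(k:ℚ)^(2*b+1)) k * cc m k := by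
      intro m hm
      simp only [Finset.mem_Icc] at hm
      rw [cc_extend n m hm.2]
    rw [Finset.sum_congr rfl h2, swap2 n]
    rw [Finset.mul_sum]
    apply Finset.sum_congr rfl
    intro k _
    rw [show 2*(b+1)+1 = (2*b+1)+2 by ring, pow_add]
    field_simp

/-- The weight in the closed form. -/
noncomputable def wgt (a b k : ℕ) : ℚ :=
  2/(k:ℚ)^(2*(a+b)+2) + 4*(∑ j ∈ Icc 1 (k-1), (1:ℚ)/(j:ℚ)^(2*b+1))/(k:ℚ)^(2*a+1)

lemma main_cc (a b : ℕ) : ∀ n : ℕ,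
    Hstar n (List.replicate a 2 ++ ((1:ℤ) :: (List.replicate b 2 ++ [1])))
      = ∑ k ∈ Icc 1 n, wgt a b k * cc n k := by
  induction a with
  | zero =>
    intro n
    simp only [List.replicate_zero, List.nil_append]
    rw [Hstar]
    have h1 : ∀ m ∈ Icc 1 n,
        aSgn 1 ^ m / (m:ℚ) ^ (1:ℤ).natAbs * Hstar m (List.replicate b 2 ++ [1])
        = ∑ j ∈ Icc 1 n, (2/(j:ℚ)^(2*b+1)) * (cc m j / (m:ℚ)) := by
      intro m hm
      simp only [Finset.mem_Icc] at hm
      rw [aSgn_one, one_pow, show (1:ℤ).natAbs = 1 from rfl, pow_one, hstar21 b m]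
      rw [show ∑ k ∈ Icc 1 m, cc m k / (k:ℚ)^(2*b+1)
          = ∑ k ∈ Icc 1 m, (1/(k:ℚ)^(2*b+1)) * cc m k from
        Finset.sum_congr rfl (fun k _ => by ring)]
      rw [cc_extend n m hm.2, Finset.mul_sum, Finset.mul_sum]
      apply Finset.sum_congr rfl
      intro j _
      ring
    rw [Finset.sum_congr rfl h1, Finset.sum_comm]
    have h2 : ∀ j ∈ Icc 1 n,
        ∑ m ∈ Icc 1 n, (2/(j:ℚ)^(2*b+1)) * (cc m j / (m:ℚ))
        = (2/(j:ℚ)^(2*b+1)) * cc n j / (j:ℚ)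
          + (4/(j:ℚ)^(2*b+1)) * ∑ k ∈ Icc (j+1) n, cc n k / (k:ℚ) := by
      intro j hj
      simp only [Finset.mem_Icc] at hj
      rw [← Finset.mul_sum, sumT1 n hj.1]
      unfold G
      ring
    rw [Finset.sum_congr rfl h2, Finset.sum_add_distrib]
    rw [tri n (fun j => 4/(j:ℚ)^(2*b+1)) (fun k => cc n k / (k:ℚ))]
    rw [← Finset.sum_add_distrib]
    apply Finset.sum_congr rfl
    intro k hk
    simp only [Finset.mem_Icc] at hk
    unfold wgt
    have hk0 : ((k:ℚ)) ≠ 0 := by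
      have : (0:ℚ) < k := by exact_mod_cast hk.1
      positivity
    have hsum4 : ∑ j ∈ Icc 1 (k-1), (4:ℚ)/(j:ℚ)^(2*b+1)
        = 4 * ∑ j ∈ Icc 1 (k-1), (1:ℚ)/(j:ℚ)^(2*b+1) := by
      rw [Finset.mul_sum]
      exact Finset.sum_congr rfl (fun j _ => by ring)
    rw [hsum4, show 2*(0+b)+2 = (2*b+1)+1 by ring, show (2:ℕ)*0+1 = 1 by ring, pow_one]
    field_simp
    ring
  | succ a ih =>
    intro n
    rw [show List.replicate (a+1) 2 ++ ((1:ℤ) :: (List.replicate b 2 ++ [1]))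
        = (2:ℤ) :: (List.replicate a 2 ++ ((1:ℤ) :: (List.replicate b 2 ++ [1]))) by
      simp [List.replicate_succ]]
    rw [Hstar]
    have h1 : ∀ m ∈ Icc 1 n,
        aSgn 2 ^ m / (m:ℚ) ^ (2:ℤ).natAbs
          * Hstar m (List.replicate a 2 ++ ((1:ℤ) :: (List.replicate b 2 ++ [1])))
        = (1/(m:ℚ)^2) * ∑ k ∈ Icc 1 m, wgt a b k * cc m k := by
      intro m hm
      rw [aSgn_two, one_pow, show (2:ℤ).natAbs = 2 from rfl, ih m]
    rw [Finset.sum_congr rfl h1, swap2 n (wgt a b)]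
    apply Finset.sum_congr rfl
    intro k hk
    simp only [Finset.mem_Icc] at hk
    unfold wgt
    rw [show 2*((a+1)+b)+2 = (2*(a+b)+2)+2 by ring, show 2*(a+1)+1 = (2*a+1)+2 by ring,
      pow_add, pow_add]
    have hk0 : ((k:ℚ)) ≠ 0 := by
      have : (0:ℚ) < k := by exact_mod_cast hk.1
      positivity
    field_simp
    ring

theorem stmt3 (n a b : ℕ) (hn : 1 ≤ n) :
    Hstar n (List.replicate a 2 ++ [1] ++ List.replicate b 2 ++ [1])
      = 2 * ∑ k ∈ Finset.Icc 1 n,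
            (n.choose k : ℚ) / ((k : ℚ) ^ (2*(a+b)+2) * ((n+k).choose k))
        + 4 * ∑ k ∈ Finset.Icc 1 n,
            Hh (k-1) [2 * (b : ℤ) + 1] * (n.choose k) / ((k : ℚ) ^ (2*a+1) * ((n+k).choose k)) := by
  rw [show List.replicate a 2 ++ [1] ++ List.replicate b 2 ++ [1]
      = List.replicate a 2 ++ ((1:ℤ) :: (List.replicate b 2 ++ [1])) by
    simp [List.append_assoc]]
  rw [main_cc a b n, Finset.mul_sum, Finset.mul_sum, ← Finset.sum_add_distrib]
  apply Finset.sum_congr rfl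
  intro k hk
  simp only [Finset.mem_Icc] at hk
  rw [Hh_single (k-1) b]
  unfold wgt cc
  have hk0 : ((k:ℚ)) ≠ 0 := by
    have : (0:ℚ) < k := by exact_mod_cast hk.1
    positivity
  have hB := chooseQ_ne n k
  field_simp
end

section
/- For all integers n ≥ 1 and a, b, c ≥ 0, H*_n({2}^a,1,{2}^b,1,{2}^c,1) = 2·∑_{k=1}^{n} C(n,k)/(k^{2(a+b+c)+3}·C(n+k,k)) + 4·∑_{k=1}^{n} H_{k-1}(2c+1)·C(n,k)/(k^{2a+2b+2}·C(n+k,k)) + 4·∑_{k=1}^{n} H_{k-1}(2b+2c+2)·C(n,k)/(k^{2a+1}·C(n+k,k)) + 8·∑_{k=1}^{n} H_{k-1}(2b+1, 2c+1)·C(n,k)/(k^{2a+1}·C(n+k,k)). -/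
open Finset

namespace St4


def f (n j : ℕ) : ℚ := (n.choose j : ℚ) / ((n + j).choose j : ℚ)

lemma chpos (n j : ℕ) : ((n + j).choose j : ℚ) ≠ 0 :=
  Nat.cast_ne_zero.mpr (Nat.choose_pos (Nat.le_add_left j n)).ne'

lemma f_zero (n : ℕ) : f n 0 = 1 := by simp [f]

lemma f_top (n j : ℕ) (h : n < j) : f n j = 0 := by
  simp [f, Nat.choose_eq_zero_of_lt h]

lemma A1 (n j : ℕ) : (n + 1 - j) * ((n+1).choose j) = (n+1) * (n.choose j) := by
  simpa [Nat.mul_comm] using (Nat.choose_mul_succ_eq n j).symm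

lemma A2 (n j : ℕ) : (n + 1 + j) * ((n+j).choose j) = (n+1) * ((n+1+j).choose j) := by
  have := Nat.choose_mul_succ_eq (n + j) j
  have h : n + j + 1 - j = n + 1 := by omega
  have h2 : n + j + 1 = n + 1 + j := by omega
  rw [h, h2] at this
  simpa [Nat.mul_comm] using this

lemma f_succ (n j : ℕ) (h : j ≤ n + 1) :
    ((n+1 : ℚ)^2 - (j:ℚ)^2) * f (n+1) j = ((n+1 : ℚ)^2) * f n j := by
  have h1 := chpos (n+1) j
  have h2 := chpos n j
  have c1 : ((n+1 : ℚ) - j) * ((n+1).choose j : ℚ) = (n+1 : ℚ) * (n.choose j : ℚ) := by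
    have e1 : ((n + 1 - j : ℕ) : ℚ) = (n+1 : ℚ) - j := by
      push_cast [Nat.cast_sub h]; ring
    rw [← e1]
    exact_mod_cast congrArg (fun x : ℕ => (x : ℚ)) (A1 n j)
  have c2 : ((n+1 : ℚ) + j) * ((n+j).choose j : ℚ) = (n+1 : ℚ) * ((n+1+j).choose j : ℚ) := by
    exact_mod_cast congrArg (fun x : ℕ => (x : ℚ)) (A2 n j)
  rw [f, f, ← mul_div_assoc, ← mul_div_assoc, div_eq_div_iff h1 h2]
  push_cast
  linear_combination (((n:ℚ)+1+j) * ((n+j).choose j : ℚ)) * c1 + (((n:ℚ)+1) * (n.choose j : ℚ)) * c2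

-- f m i * (m - i) = f m (i+1) * (m + i + 1)
lemma f_ratio (m i : ℕ) :
    ((m : ℚ) - i) * f m i = ((m : ℚ) + i + 1) * f m (i+1) := by
  rcases le_or_gt i m with h | h
  · have n1 : (m - i) * (m.choose i) = (m.choose (i+1)) * (i+1) := by
      simpa [Nat.mul_comm] using (Nat.choose_succ_right_eq m i).symm
    have n2 : (m + i + 1) * ((m+i).choose i) = ((m+i+1).choose (i+1)) * (i+1) := by
      have := Nat.add_one_mul_choose_eq (m+i) i
      simpa [Nat.succ_eq_add_one, Nat.mul_comm] using this
    have c1 : ((m : ℚ) - i) * (m.choose i : ℚ) = (m.choose (i+1) : ℚ) * ((i:ℚ)+1) := by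
      have e1 : ((m - i : ℕ) : ℚ) = (m : ℚ) - i := by push_cast [Nat.cast_sub h]; ring
      rw [← e1]; exact_mod_cast congrArg (fun x : ℕ => (x : ℚ)) n1
    have c2 : ((m : ℚ) + i + 1) * ((m+i).choose i : ℚ)
        = ((m+i+1).choose (i+1) : ℚ) * ((i:ℚ)+1) := by
      exact_mod_cast congrArg (fun x : ℕ => (x : ℚ)) n2
    have h1 := chpos m i
    have h2 : ((m + (i+1)).choose (i+1) : ℚ) ≠ 0 := chpos m (i+1)
    have e2 : m + (i+1) = m + i + 1 := by omega
    rw [f, f, e2, ← mul_div_assoc, ← mul_div_assoc, div_eq_div_iff h1 (by rw [← e2] at *; exact h2)]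
    push_cast
    linear_combination (((m+i+1).choose (i+1) : ℚ)) * c1 - ((m.choose (i+1) : ℚ)) * c2
  · rw [f_top m i h, f_top m (i+1) (by omega)]
    ring


lemma Icc_insert (i m : ℕ) (h : i + 1 ≤ m) :
    Icc (i+1) m = insert (i+1) (Icc (i+2) m) := by
  ext x; simp only [Finset.mem_Icc, Finset.mem_insert]; omega

lemma claimC : ∀ d m i : ℕ, i + d = m →
    ((m : ℚ) - i) * f m i = 2 * ∑ j ∈ Icc (i+1) m, (j : ℚ) * f m j := by
  intro d
  induction d with
  | zero =>
    intro m i h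
    subst h
    simp only [Nat.add_zero]
    rw [show Icc (i+1) i = ∅ by rw [Finset.Icc_eq_empty_of_lt]; omega]
    simp
  | succ d ih =>
    intro m i h
    have hi : i + 1 ≤ m := by omega
    have key := ih m (i+1) (by omega)
    rw [Icc_insert i m hi, Finset.sum_insert (by simp only [Finset.mem_Icc]; omega)]
    push_cast at key ⊢
    have rat := f_ratio m i
    linarith [key, rat]

lemma sum_Icc_top {a b : ℕ} (h : a ≤ b + 1) (g : ℕ → ℚ) :
    ∑ k ∈ Icc a (b+1), g k = (∑ k ∈ Icc a b, g k) + g (b+1) :=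
  Finset.sum_Icc_succ_top h g

-- Lemma L2
lemma L2 (j : ℕ) (hj : 1 ≤ j) : ∀ n, j ≤ n →
    ∑ k ∈ Icc j n, f k j / (k:ℚ)^2 = f n j / (j:ℚ)^2 := by
  intro n
  induction n with
  | zero => intro h; omega
  | succ n ih =>
    intro h
    rcases Nat.lt_or_ge n j with h2 | h2
    · have : j = n + 1 := by omega
      subst this
      rw [show Icc (n+1) (n+1) = {n+1} from Finset.Icc_self _]
      simp
    · rw [sum_Icc_top (by omega), ih h2]
      have hs := f_succ n j (by omega)
      have hm : ((n:ℚ)+1) ≠ 0 := by positivity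
      have hj2 : ((j:ℚ)) ≠ 0 := by
        exact Nat.cast_ne_zero.mpr (by omega)
      field_simp
      push_cast at hs ⊢
      ring_nf
      ring_nf at hs
      nlinarith [hs]


lemma step_alg (P Q A B C i m : ℚ) (hi : i ≠ 0) (hm : m ≠ 0)
    (hfi : (m^2 - i^2) * P = m^2 * Q)
    (key : (m - i) * P = 2 * (B + m * C)) :
    Q / i + 2 * (A - B / m^2) + P / m = P / i + 2 * (A + C / m) := by
  rw [← sub_eq_zero]
  have e : Q / i + 2 * (A - B / m^2) + P / m - (P / i + 2 * (A + C / m))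
      = (i*((m-i)*P - 2*(B+m*C)) - ((m^2-i^2)*P - m^2*Q)) / (i*m^2) := by
    field_simp; ring
  rw [e, sub_eq_zero.mpr key, sub_eq_zero.mpr hfi]; simp

lemma star (i : ℕ) (hi : 1 ≤ i) : ∀ n, i ≤ n →
    ∑ k ∈ Icc i n, f k i / (k:ℚ) = f n i / (i:ℚ) + 2 * ∑ j ∈ Icc (i+1) n, f n j / (j:ℚ) := by
  intro n
  induction n with
  | zero => intro h; omega
  | succ n ih =>
    intro h
    rcases Nat.lt_or_ge n i with h2 | h2
    · have hni : i = n + 1 := by omega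
      subst hni
      rw [Finset.Icc_self, show Icc (n+1+1) (n+1) = ∅ from Finset.Icc_eq_empty_of_lt (by omega)]
      simp
    · rw [sum_Icc_top (by omega), ih h2, sum_Icc_top (by omega : i+1 ≤ n+1)]
      have hm : ((n:ℚ)+1) ≠ 0 := by positivity
      have hi' : (i:ℚ) ≠ 0 := Nat.cast_ne_zero.mpr (by omega)
      have key := claimC (n+1-i) (n+1) i (by omega)
      rw [sum_Icc_top (by omega : i+1 ≤ n+1)] at key
      have hfi := f_succ n i (by omega)
      have hpt : ∑ j ∈ Icc (i+1) n, f n j / (j:ℚ)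
          = ∑ j ∈ Icc (i+1) n, (f (n+1) j / (j:ℚ) - (j:ℚ) * f (n+1) j / ((n:ℚ)+1)^2) := by
        apply Finset.sum_congr rfl
        intro j hj
        simp only [Finset.mem_Icc] at hj
        have hfj := f_succ n j (by omega)
        have hjne : (j:ℚ) ≠ 0 := Nat.cast_ne_zero.mpr (by omega)
        rw [← sub_eq_zero]
        have e : f n j / (j:ℚ) - (f (n+1) j / (j:ℚ) - (j:ℚ) * f (n+1) j / ((n:ℚ)+1)^2)
            = ((((n:ℚ)+1)^2 * f n j) - ((((n:ℚ)+1)^2 - (j:ℚ)^2) * f (n+1) j)) / ((j:ℚ) * ((n:ℚ)+1)^2) := by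
          field_simp
        rw [e, hfj, sub_self, zero_div]
      rw [hpt, Finset.sum_sub_distrib,
        show ∑ j ∈ Icc (i+1) n, (j:ℚ) * f (n+1) j / ((n:ℚ)+1)^2
          = (∑ j ∈ Icc (i+1) n, (j:ℚ) * f (n+1) j) / ((n:ℚ)+1)^2 from
          (Finset.sum_div _ _ _).symm]
      push_cast at key ⊢
      have := step_alg (f (n+1) i) (f n i) (∑ j ∈ Icc (i+1) n, f (n+1) j / (j:ℚ))
        (∑ j ∈ Icc (i+1) n, (j:ℚ) * f (n+1) j) (f (n+1) (n+1)) (i:ℚ) ((n:ℚ)+1)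
        hi' hm hfi key
      linarith [this]


def Rr (n s : ℕ) (g : ℕ → ℚ) : ℚ := ∑ j ∈ Icc 1 n, g j * (f n j / (j:ℚ)^s)

lemma tri_swap (n : ℕ) (F : ℕ → ℕ → ℚ) :
    ∑ k ∈ Icc 1 n, ∑ j ∈ Icc 1 k, F k j = ∑ j ∈ Icc 1 n, ∑ k ∈ Icc j n, F k j := by
  have h1 : ∑ k ∈ Icc 1 n, ∑ j ∈ Icc 1 k, F k j
      = ∑ k ∈ Icc 1 n, ∑ j ∈ Icc 1 n, if j ≤ k then F k j else 0 := by
    apply Finset.sum_congr rfl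
    intro k hk
    simp only [Finset.mem_Icc] at hk
    rw [← Finset.sum_filter]
    congr 1
    ext x
    simp only [Finset.mem_Icc, Finset.mem_filter]
    omega
  rw [h1, Finset.sum_comm]
  apply Finset.sum_congr rfl
  intro j hj
  simp only [Finset.mem_Icc] at hj
  rw [← Finset.sum_filter]
  congr 1
  ext x
  simp only [Finset.mem_Icc, Finset.mem_filter]
  omega

lemma tri_swap' (n : ℕ) (F : ℕ → ℕ → ℚ) :
    ∑ j ∈ Icc 1 n, ∑ l ∈ Icc (j+1) n, F j l
      = ∑ l ∈ Icc 1 n, ∑ j ∈ Icc 1 (l-1), F j l := by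
  have h1 : ∑ j ∈ Icc 1 n, ∑ l ∈ Icc (j+1) n, F j l
      = ∑ j ∈ Icc 1 n, ∑ l ∈ Icc 1 n, if j + 1 ≤ l then F j l else 0 := by
    apply Finset.sum_congr rfl
    intro j hj
    simp only [Finset.mem_Icc] at hj
    rw [← Finset.sum_filter]
    congr 1
    ext x
    simp only [Finset.mem_Icc, Finset.mem_filter]
    omega
  rw [h1, Finset.sum_comm]
  apply Finset.sum_congr rfl
  intro l hl
  simp only [Finset.mem_Icc] at hl
  rw [← Finset.sum_filter]
  congr 1
  ext x
  simp only [Finset.mem_Icc, Finset.mem_filter]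
  omega

lemma RL2 (s : ℕ) (g : ℕ → ℚ) (n : ℕ) :
    ∑ k ∈ Icc 1 n, (1/(k:ℚ)^2) * Rr k s g = Rr n (s+2) g := by
  unfold Rr
  have h1 : ∀ k ∈ Icc 1 n, (1/(k:ℚ)^2) * ∑ j ∈ Icc 1 k, g j * (f k j / (j:ℚ)^s)
      = ∑ j ∈ Icc 1 k, (g j / (j:ℚ)^s) * (f k j / (k:ℚ)^2) := by
    intro k hk
    rw [Finset.mul_sum]
    apply Finset.sum_congr rfl
    intro j hj
    ring
  rw [Finset.sum_congr rfl h1, tri_swap n (fun k j => (g j / (j:ℚ)^s) * (f k j / (k:ℚ)^2))]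
  apply Finset.sum_congr rfl
  intro j hj
  simp only [Finset.mem_Icc] at hj
  rw [← Finset.mul_sum, L2 j hj.1 n hj.2]
  have hjne : (j:ℚ) ≠ 0 := Nat.cast_ne_zero.mpr (by omega)
  rw [pow_add]
  field_simp

lemma RL1 (s : ℕ) (g : ℕ → ℚ) (n : ℕ) :
    ∑ k ∈ Icc 1 n, (1/(k:ℚ)) * Rr k s g
      = Rr n (s+1) g + 2 * Rr n 1 (fun l => ∑ i ∈ Icc 1 (l-1), g i / (i:ℚ)^s) := by
  unfold Rr
  have h1 : ∀ k ∈ Icc 1 n, (1/(k:ℚ)) * ∑ j ∈ Icc 1 k, g j * (f k j / (j:ℚ)^s)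
      = ∑ j ∈ Icc 1 k, (g j / (j:ℚ)^s) * (f k j / (k:ℚ)) := by
    intro k hk
    rw [Finset.mul_sum]
    apply Finset.sum_congr rfl
    intro j hj
    ring
  rw [Finset.sum_congr rfl h1, tri_swap n (fun k j => (g j / (j:ℚ)^s) * (f k j / (k:ℚ)))]
  have h2 : ∀ j ∈ Icc 1 n, ∑ k ∈ Icc j n, (g j / (j:ℚ)^s) * (f k j / (k:ℚ))
      = (g j / (j:ℚ)^s) * (f n j / (j:ℚ)) +
        ∑ l ∈ Icc (j+1) n, 2 * (g j / (j:ℚ)^s) * (f n l / (l:ℚ)) := by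
    intro j hj
    simp only [Finset.mem_Icc] at hj
    rw [← Finset.mul_sum, star j hj.1 n hj.2]
    rw [Finset.mul_sum]
    rw [mul_add]
    congr 1
    · rw [← Finset.mul_sum, ← Finset.mul_sum]
      ring
  rw [Finset.sum_congr rfl h2, Finset.sum_add_distrib]
  congr 1
  · apply Finset.sum_congr rfl
    intro j hj
    simp only [Finset.mem_Icc] at hj
    have hjne : (j:ℚ) ≠ 0 := Nat.cast_ne_zero.mpr (by omega)
    rw [pow_add]
    field_simp
  · rw [tri_swap' n (fun j l => 2 * (g j / (j:ℚ)^s) * (f n l / (l:ℚ)))]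
    rw [Finset.mul_sum]
    apply Finset.sum_congr rfl
    intro l hl
    simp only [pow_one, Finset.sum_mul, Finset.mul_sum]
    apply Finset.sum_congr rfl
    intros
    ring


lemma Hstar_cons (n : ℕ) (s : ℤ) (r : List ℤ) :
    Hstar n (s :: r) = ∑ k ∈ Icc 1 n, aSgn s ^ k / (k : ℚ) ^ s.natAbs * Hstar k r := by
  rw [Hstar]

lemma Hstar_two (n : ℕ) (r : List ℤ) :
    Hstar n ((2:ℤ) :: r) = ∑ k ∈ Icc 1 n, (1/(k:ℚ)^2) * Hstar k r := by
  rw [Hstar_cons]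
  apply Finset.sum_congr rfl
  intro k _
  norm_num [aSgn]

lemma Hstar_one (n : ℕ) (r : List ℤ) :
    Hstar n ((1:ℤ) :: r) = ∑ k ∈ Icc 1 n, (1/(k:ℚ)) * Hstar k r := by
  rw [Hstar_cons]
  apply Finset.sum_congr rfl
  intro k _
  norm_num [aSgn]

lemma base_alg (A B C m : ℚ) (hm : m ≠ 0) (key : m = 2*(B + m*C)) :
    2*(A - B/m^2) + 1/m = 2*(A + C/m) := by
  rw [← sub_eq_zero]
  have e : 2*(A - B/m^2) + 1/m - 2*(A + C/m) = (m - 2*(B + m*C)) / m^2 := by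
    field_simp; ring
  rw [e, sub_eq_zero.mpr key]; simp

lemma base2 : ∀ n : ℕ, ∑ k ∈ Icc 1 n, 1/(k:ℚ) = 2 * ∑ j ∈ Icc 1 n, f n j / (j:ℚ) := by
  intro n
  induction n with
  | zero => simp
  | succ n ih =>
    rw [sum_Icc_top (by omega), sum_Icc_top (by omega), ih]
    have key := claimC (n+1) (n+1) 0 (by omega)
    rw [show (0:ℕ)+1 = 1 from rfl, sum_Icc_top (by omega : 1 ≤ n+1), f_zero] at key
    have hm : ((n:ℚ)+1) ≠ 0 := by positivity
    have hpt : ∑ j ∈ Icc 1 n, f n j / (j:ℚ)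
        = ∑ j ∈ Icc 1 n, (f (n+1) j / (j:ℚ) - (j:ℚ) * f (n+1) j / ((n:ℚ)+1)^2) := by
      apply Finset.sum_congr rfl
      intro j hj
      simp only [Finset.mem_Icc] at hj
      have hfj := f_succ n j (by omega)
      have hjne : (j:ℚ) ≠ 0 := Nat.cast_ne_zero.mpr (by omega)
      rw [← sub_eq_zero]
      have e : f n j / (j:ℚ) - (f (n+1) j / (j:ℚ) - (j:ℚ) * f (n+1) j / ((n:ℚ)+1)^2)
          = ((((n:ℚ)+1)^2 * f n j) - ((((n:ℚ)+1)^2 - (j:ℚ)^2) * f (n+1) j)) / ((j:ℚ) * ((n:ℚ)+1)^2) := by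
        field_simp
      rw [e, hfj, sub_self, zero_div]
    rw [hpt, Finset.sum_sub_distrib,
      show ∑ j ∈ Icc 1 n, (j:ℚ) * f (n+1) j / ((n:ℚ)+1)^2
        = (∑ j ∈ Icc 1 n, (j:ℚ) * f (n+1) j) / ((n:ℚ)+1)^2 from (Finset.sum_div _ _ _).symm]
    push_cast at key ⊢
    have := base_alg (∑ j ∈ Icc 1 n, f (n+1) j / (j:ℚ))
      (∑ j ∈ Icc 1 n, (j:ℚ) * f (n+1) j) (f (n+1) (n+1)) ((n:ℚ)+1) hm (by linarith [key])
    linarith [this]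

def g0 : ℕ → ℚ := fun _ => 1

lemma base (n : ℕ) : Hstar n [(1:ℤ)] = 2 * Rr n 1 g0 := by
  rw [Hstar_one]
  have h1 : ∀ k ∈ Icc 1 n, (1/(k:ℚ)) * Hstar k [] = 1/(k:ℚ) := by
    intro k _
    rw [Hstar]
    ring
  rw [Finset.sum_congr rfl h1, base2 n]
  unfold Rr g0
  congr 1
  apply Finset.sum_congr rfl
  intro j _
  rw [pow_one, one_mul]

lemma rep2_four (L : List ℤ) (c1 c2 c3 c4 : ℚ) (s1 s2 s3 s4 : ℕ) (g1 g2 g3 g4 : ℕ → ℚ)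
    (hL : ∀ n, Hstar n L
      = c1 * Rr n s1 g1 + c2 * Rr n s2 g2 + c3 * Rr n s3 g3 + c4 * Rr n s4 g4) :
    ∀ (a n : ℕ), Hstar n (List.replicate a 2 ++ L)
      = c1 * Rr n (s1+2*a) g1 + c2 * Rr n (s2+2*a) g2
        + c3 * Rr n (s3+2*a) g3 + c4 * Rr n (s4+2*a) g4 := by
  intro a
  induction a with
  | zero => simpa using hL
  | succ a ih =>
    intro n
    rw [show List.replicate (a+1) (2:ℤ) ++ L = 2 :: (List.replicate a 2 ++ L) by
      simp [List.replicate_succ]]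
    rw [Hstar_two, Finset.sum_congr rfl (fun k _ => by rw [ih k])]
    have expand : ∀ k : ℕ, (1/(k:ℚ)^2) * (c1 * Rr k (s1+2*a) g1 + c2 * Rr k (s2+2*a) g2
          + c3 * Rr k (s3+2*a) g3 + c4 * Rr k (s4+2*a) g4)
        = c1 * ((1/(k:ℚ)^2) * Rr k (s1+2*a) g1) + c2 * ((1/(k:ℚ)^2) * Rr k (s2+2*a) g2)
          + c3 * ((1/(k:ℚ)^2) * Rr k (s3+2*a) g3)
          + c4 * ((1/(k:ℚ)^2) * Rr k (s4+2*a) g4) := by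
      intro k; ring
    rw [Finset.sum_congr rfl (fun k _ => expand k)]
    rw [Finset.sum_add_distrib, Finset.sum_add_distrib, Finset.sum_add_distrib]
    rw [← Finset.mul_sum, ← Finset.mul_sum, ← Finset.mul_sum, ← Finset.mul_sum]
    rw [RL2, RL2, RL2, RL2]
    have e1 : s1+2*a+2 = s1+2*(a+1) := by ring
    have e2 : s2+2*a+2 = s2+2*(a+1) := by ring
    have e3 : s3+2*a+2 = s3+2*(a+1) := by ring
    have e4 : s4+2*a+2 = s4+2*(a+1) := by ring
    rw [e1, e2, e3, e4]

lemma one_two (L : List ℤ) (c1 c2 : ℚ) (s1 s2 : ℕ) (g1 g2 : ℕ → ℚ)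
    (hL : ∀ n, Hstar n L = c1 * Rr n s1 g1 + c2 * Rr n s2 g2) :
    ∀ n, Hstar n ((1:ℤ) :: L)
      = c1 * Rr n (s1+1) g1
        + 2*c1 * Rr n 1 (fun l => ∑ i ∈ Icc 1 (l-1), g1 i / (i:ℚ)^s1)
        + c2 * Rr n (s2+1) g2
        + 2*c2 * Rr n 1 (fun l => ∑ i ∈ Icc 1 (l-1), g2 i / (i:ℚ)^s2) := by
  intro n
  rw [Hstar_one, Finset.sum_congr rfl (fun k _ => by rw [hL k])]
  have expand : ∀ k : ℕ, (1/(k:ℚ)) * (c1 * Rr k s1 g1 + c2 * Rr k s2 g2)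
      = c1 * ((1/(k:ℚ)) * Rr k s1 g1) + c2 * ((1/(k:ℚ)) * Rr k s2 g2) := by
    intro k; ring
  rw [Finset.sum_congr rfl (fun k _ => expand k)]
  rw [Finset.sum_add_distrib, ← Finset.mul_sum, ← Finset.mul_sum, RL1, RL1]
  ring


def Gc (c : ℕ) : ℕ → ℚ := fun l => ∑ i ∈ Icc 1 (l-1), g0 i / (i:ℚ)^(1+2*c)
def Gbc (b c : ℕ) : ℕ → ℚ := fun l => ∑ i ∈ Icc 1 (l-1), g0 i / (i:ℚ)^(1+2*c+1+2*b)
def Wbc (b c : ℕ) : ℕ → ℚ := fun l => ∑ i ∈ Icc 1 (l-1), Gc c i / (i:ℚ)^(1+2*b)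

lemma E1 (c : ℕ) : ∀ n, Hstar n (List.replicate c 2 ++ [1]) = 2 * Rr n (1+2*c) g0 := by
  intro n
  have h := rep2_four [(1:ℤ)] 2 0 0 0 1 1 1 1 g0 g0 g0 g0
    (fun m => by rw [base m]; ring) c n
  rw [h]; ring

lemma E2 (c : ℕ) : ∀ n, Hstar n ((1:ℤ) :: (List.replicate c 2 ++ [1]))
    = 2 * Rr n (1+2*c+1) g0 + 4 * Rr n 1 (Gc c) := by
  intro n
  have h := one_two (List.replicate c 2 ++ [1]) 2 0 (1+2*c) 1 g0 g0
    (fun m => by rw [E1 c m]; ring) n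
  rw [h]; unfold Gc; ring

lemma E3 (b c : ℕ) : ∀ n, Hstar n (List.replicate b 2 ++ ((1:ℤ) :: (List.replicate c 2 ++ [1])))
    = 2 * Rr n (1+2*c+1+2*b) g0 + 4 * Rr n (1+2*b) (Gc c) := by
  intro n
  have h := rep2_four ((1:ℤ) :: (List.replicate c 2 ++ [1])) 2 4 0 0 (1+2*c+1) 1 1 1
    g0 (Gc c) g0 g0 (fun m => by rw [E2 c m]; ring) b n
  rw [h]; ring

lemma E4 (b c : ℕ) : ∀ n,
    Hstar n ((1:ℤ) :: (List.replicate b 2 ++ ((1:ℤ) :: (List.replicate c 2 ++ [1]))))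
    = 2 * Rr n (1+2*c+1+2*b+1) g0 + 4 * Rr n 1 (Gbc b c)
      + 4 * Rr n (1+2*b+1) (Gc c) + 8 * Rr n 1 (Wbc b c) := by
  intro n
  have h := one_two (List.replicate b 2 ++ ((1:ℤ) :: (List.replicate c 2 ++ [1])))
    2 4 (1+2*c+1+2*b) (1+2*b) g0 (Gc c) (fun m => E3 b c m) n
  rw [h]; unfold Gbc Wbc; ring

lemma E5 (a b c : ℕ) : ∀ n,
    Hstar n (List.replicate a 2
      ++ ((1:ℤ) :: (List.replicate b 2 ++ ((1:ℤ) :: (List.replicate c 2 ++ [1])))))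
    = 2 * Rr n (1+2*c+1+2*b+1+2*a) g0 + 4 * Rr n (1+2*a) (Gbc b c)
      + 4 * Rr n (1+2*b+1+2*a) (Gc c) + 8 * Rr n (1+2*a) (Wbc b c) := by
  intro n
  have h := rep2_four ((1:ℤ) :: (List.replicate b 2 ++ ((1:ℤ) :: (List.replicate c 2 ++ [1]))))
    2 4 4 8 (1+2*c+1+2*b+1) 1 (1+2*b+1) 1 g0 (Gbc b c) (Gc c) (Wbc b c)
    (fun m => E4 b c m) a n
  rw [h]

lemma conv0 (n s : ℕ) :
    Rr n s g0 = ∑ k ∈ Icc 1 n, (n.choose k : ℚ) / ((k:ℚ)^s * ((n+k).choose k)) := by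
  unfold Rr f g0
  apply Finset.sum_congr rfl
  intro k _
  rw [one_mul, div_div, mul_comm (((n+k).choose k : ℚ)) ((k:ℚ)^s)]

lemma conv (n s : ℕ) (W Hw : ℕ → ℚ) (h : ∀ k, 1 ≤ k → W k = Hw k) :
    Rr n s W = ∑ k ∈ Icc 1 n, Hw k * (n.choose k : ℚ) / ((k:ℚ)^s * ((n+k).choose k)) := by
  unfold Rr f
  apply Finset.sum_congr rfl
  intro k hk
  simp only [Finset.mem_Icc] at hk
  rw [h k hk.1, div_div, mul_comm (((n+k).choose k : ℚ)) ((k:ℚ)^s), ← mul_div_assoc]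

lemma Hh_nil (m : ℕ) : Hh m [] = 1 := by rw [Hh]

lemma Hh_single (e : ℕ) (he : 0 < e) (m : ℕ) :
    Hh m [(e:ℤ)] = ∑ i ∈ Icc 1 m, 1/(i:ℚ)^e := by
  rw [Hh]
  apply Finset.sum_congr rfl
  intro i _
  rw [Hh_nil]
  have h1 : aSgn (e:ℤ) = 1 := by
    unfold aSgn
    rw [if_pos (by exact_mod_cast he)]
  rw [h1, one_pow, Int.natAbs_natCast, mul_one]

lemma wGc (b c : ℕ) : ∀ k, 1 ≤ k → Gc c k = Hh (k-1) [2*(c:ℤ)+1] := by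
  intro k _
  have he : (2*(c:ℤ)+1) = ((2*c+1 : ℕ) : ℤ) := by push_cast; ring
  rw [he, Hh_single (2*c+1) (by omega)]
  unfold Gc g0
  rw [show 1+2*c = 2*c+1 from by ring]

lemma wGbc (b c : ℕ) : ∀ k, 1 ≤ k → Gbc b c k = Hh (k-1) [2*(b:ℤ)+2*(c:ℤ)+2] := by
  intro k _
  have he : (2*(b:ℤ)+2*(c:ℤ)+2) = ((2*b+2*c+2 : ℕ) : ℤ) := by push_cast; ring
  rw [he, Hh_single (2*b+2*c+2) (by omega)]
  unfold Gbc g0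
  rw [show 1+2*c+1+2*b = 2*b+2*c+2 from by ring]

lemma wWbc (b c : ℕ) : ∀ k, 1 ≤ k → Wbc b c k = Hh (k-1) [2*(b:ℤ)+1, 2*(c:ℤ)+1] := by
  intro k _
  rw [Hh]
  unfold Wbc
  apply Finset.sum_congr rfl
  intro i hi
  simp only [Finset.mem_Icc] at hi
  rw [wGc b c i hi.1]
  have h1 : aSgn (2*(b:ℤ)+1) = 1 := by
    unfold aSgn
    rw [if_pos (by omega)]
  have h2 : (2*(b:ℤ)+1).natAbs = 2*b+1 := by omega
  rw [h1, one_pow, h2, show 1+2*b = 2*b+1 from by ring]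
  ring


lemma convGc (n s b c : ℕ) : Rr n s (Gc c)
    = ∑ k ∈ Icc 1 n, Hh (k-1) [2*(c:ℤ)+1] * (n.choose k : ℚ)
        / ((k:ℚ)^s * ((n+k).choose k)) :=
  conv n s (Gc c) (fun k => Hh (k-1) [2*(c:ℤ)+1]) (wGc b c)

lemma convGbc (n s b c : ℕ) : Rr n s (Gbc b c)
    = ∑ k ∈ Icc 1 n, Hh (k-1) [2*(b:ℤ)+2*(c:ℤ)+2] * (n.choose k : ℚ)
        / ((k:ℚ)^s * ((n+k).choose k)) :=
  conv n s (Gbc b c) (fun k => Hh (k-1) [2*(b:ℤ)+2*(c:ℤ)+2]) (wGbc b c)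

lemma convWbc (n s b c : ℕ) : Rr n s (Wbc b c)
    = ∑ k ∈ Icc 1 n, Hh (k-1) [2*(b:ℤ)+1, 2*(c:ℤ)+1] * (n.choose k : ℚ)
        / ((k:ℚ)^s * ((n+k).choose k)) :=
  conv n s (Wbc b c) (fun k => Hh (k-1) [2*(b:ℤ)+1, 2*(c:ℤ)+1]) (wWbc b c)

end St4

theorem stmt4 (n a b c : ℕ) (hn : 1 ≤ n) :
    Hstar n (List.replicate a 2 ++ [1] ++ List.replicate b 2 ++ [1]
              ++ List.replicate c 2 ++ [1])
      = 2 * ∑ k ∈ Finset.Icc 1 n,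
            (n.choose k : ℚ) / ((k : ℚ) ^ (2*(a+b+c)+3) * ((n+k).choose k))
        + 4 * ∑ k ∈ Finset.Icc 1 n,
            Hh (k-1) [2 * (c : ℤ) + 1] * (n.choose k)
              / ((k : ℚ) ^ (2*a+2*b+2) * ((n+k).choose k))
        + 4 * ∑ k ∈ Finset.Icc 1 n,
            Hh (k-1) [2 * (b : ℤ) + 2 * (c : ℤ) + 2] * (n.choose k)
              / ((k : ℚ) ^ (2*a+1) * ((n+k).choose k))
        + 8 * ∑ k ∈ Finset.Icc 1 n,
            Hh (k-1) [2 * (b : ℤ) + 1, 2 * (c : ℤ) + 1] * (n.choose k)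
              / ((k : ℚ) ^ (2*a+1) * ((n+k).choose k)) := by
  have hlist : List.replicate a (2:ℤ) ++ [1] ++ List.replicate b 2 ++ [1]
        ++ List.replicate c 2 ++ [1]
      = List.replicate a (2:ℤ)
          ++ ((1:ℤ) :: (List.replicate b 2 ++ ((1:ℤ) :: (List.replicate c 2 ++ [1])))) := by
    simp
  rw [hlist, St4.E5 a b c n]
  rw [show 1+2*c+1+2*b+1+2*a = 2*(a+b+c)+3 from by ring]
  rw [show 1+2*b+1+2*a = 2*a+2*b+2 from by ring]
  rw [show 1+2*a = 2*a+1 from by ring]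
  rw [St4.conv0 n (2*(a+b+c)+3), St4.convGbc n (2*a+1) b c,
    St4.convGc n (2*a+2*b+2) b c, St4.convWbc n (2*a+1) b c]
  ring
end

section
/- For all integers n ≥ 1 and t ≥ 1, H*_n({2}^t) = -2·∑_{k=1}^{n} (-1)^k·C(n,k)/(k^{2t}·C(n+k,k)). -/
open Finset

namespace Aux5
open Nat

/-- `g n k = C(n,k)/C(n+k,k)` as a rational number. -/
def g (n k : ℕ) : ℚ := (n.choose k : ℚ) / ((n+k).choose k)

lemma factQ_ne (m : ℕ) : ((m ! : ℕ) : ℚ) ≠ 0 :=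
  Nat.cast_ne_zero.mpr (Nat.factorial_ne_zero m)

lemma gfact {n k : ℕ} (h : k ≤ n) :
    g n k = ((n ! : ℕ) : ℚ)^2 / (((n-k)! : ℕ) * ((n+k)! : ℕ)) := by
  unfold g
  rw [Nat.cast_choose ℚ h, Nat.cast_choose ℚ (Nat.le_add_left k n), Nat.add_sub_cancel]
  have h1 := factQ_ne k
  have h2 := factQ_ne (n - k)
  have h3 := factQ_ne n
  have h4 := factQ_ne (n + k)
  field_simp

lemma g_zero {n k : ℕ} (h : n < k) : g n k = 0 := by
  unfold g
  rw [Nat.choose_eq_zero_of_lt h]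
  simp

lemma g1 (n k : ℕ) :
    g n k * ((n:ℚ)+1)^2 = g (n+1) k * (((n:ℚ)+1)^2 - (k:ℚ)^2) := by
  rcases lt_or_ge n k with hlt | hle
  · rcases eq_or_lt_of_le (Nat.succ_le_of_lt hlt) with heq | hlt2
    · rw [g_zero hlt, ← heq]
      push_cast
      ring
    · rw [g_zero hlt, g_zero hlt2]
      ring
  · rw [gfact hle, gfact (le_trans hle (Nat.le_succ n))]
    have e1 : (n+1) - k = (n - k) + 1 := by omega
    have e2 : (n+1) + k = (n + k) + 1 := by omega
    rw [e1, e2, Nat.factorial_succ, Nat.factorial_succ, Nat.factorial_succ]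
    have h2 := factQ_ne (n - k)
    have h4 := factQ_ne (n + k)
    have hc : ((n - k : ℕ) : ℚ) = (n : ℚ) - k := by
      push_cast [Nat.cast_sub hle]; ring
    have h5 : ((n - k : ℕ) : ℚ) + 1 ≠ 0 := by positivity
    have h6 : ((n + k : ℕ) : ℚ) + 1 ≠ 0 := by positivity
    have hE : ((n:ℚ)+1)^2 - (k:ℚ)^2 ≠ 0 := by
      have : (k:ℚ) ≤ n := by exact_mod_cast hle
      have hk0 : (0:ℚ) ≤ k := by positivity
      nlinarith
    push_cast
    push_cast at hc h5 h6
    rw [hc] at h5 ⊢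
    field_simp
    ring


lemma g2 {n j : ℕ} (h : j + 1 ≤ n) :
    g n j * ((n:ℚ) - j) = g n (j+1) * ((n:ℚ) + j + 1) := by
  rw [gfact (le_trans (Nat.le_succ j) h), gfact h]
  have e1 : n - j = (n - (j+1)) + 1 := by omega
  have e2 : n + (j+1) = (n + j) + 1 := by omega
  rw [e1, e2, Nat.factorial_succ, Nat.factorial_succ]
  have h2 := factQ_ne (n - (j+1))
  have h4 := factQ_ne (n + j)
  have hc : ((n - (j+1) : ℕ) : ℚ) = (n : ℚ) - j - 1 := by
    push_cast [Nat.cast_sub h]; ring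
  have h5 : ((n - (j+1) : ℕ) : ℚ) + 1 ≠ 0 := by positivity
  have h6 : ((n + j : ℕ) : ℚ) + 1 ≠ 0 := by positivity
  have h7 : (n:ℚ) - (j:ℚ) ≠ 0 := by
    have : (j:ℚ) + 1 ≤ n := by exact_mod_cast h
    intro hz; nlinarith
  push_cast
  push_cast at hc h5 h6
  rw [hc] at h5 ⊢
  field_simp
  ring

lemma g_n_zero (n : ℕ) : g n 0 = 1 := by
  unfold g; simp

lemma sum_Icc_one (n : ℕ) (f : ℕ → ℚ) :
    ∑ k ∈ Icc 1 n, f k = ∑ i ∈ range n, f (i+1) := by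
  induction n with
  | zero => simp
  | succ m ih =>
      rw [Finset.sum_Icc_succ_top (by omega), ih, Finset.sum_range_succ]

lemma lemB {n : ℕ} (hn : 1 ≤ n) :
    ∑ k ∈ Icc 1 n, (-1:ℚ)^k * g n k = -(1/2) := by
  have hn0 : ((n:ℚ)) ≠ 0 := by positivity
  set h : ℕ → ℚ := fun k => (-1:ℚ)^k * g n k * ((n:ℚ) - k) / (2*n) with hdef
  have step : ∀ i ∈ range n, (-1:ℚ)^(i+1) * g n (i+1) = h (i+1) - h i := by
    intro i hi
    rw [Finset.mem_range] at hi
    have hg2 := g2 (n := n) (j := i) hi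
    simp only [hdef]
    push_cast
    rw [div_sub_div_same, eq_div_iff (by positivity : (2:ℚ)*(n:ℚ) ≠ 0)]
    linear_combination ((-1:ℚ)^i) * hg2
  rw [sum_Icc_one]
  rw [Finset.sum_congr rfl step, Finset.sum_range_sub]
  simp only [hdef]
  rw [g_n_zero]
  push_cast
  field_simp
  ring

lemma lemT {j : ℕ} (hj : 1 ≤ j) : ∀ n, j ≤ n →
    ∑ k ∈ Icc j n, (1/(k:ℚ)^2) * g k j = g n j / (j:ℚ)^2 := by
  refine Nat.le_induction ?_ ?_
  · rw [Finset.Icc_self, Finset.sum_singleton]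
    ring
  · intro m hm ih
    rw [Finset.sum_Icc_succ_top (by omega), ih]
    have h1 := g1 m j
    have hj2 : ((j:ℚ))^2 ≠ 0 := by positivity
    have hm2 : (((m:ℕ):ℚ)+1)^2 ≠ 0 := by positivity
    push_cast
    rw [one_div, inv_mul_eq_div, div_add_div _ _ hj2 hm2,
      div_eq_div_iff (by positivity) hj2]
    linear_combination ((j:ℚ)^2) * h1

lemma key : ∀ (t : ℕ), ∀ n, 1 ≤ n → Hstar n (List.replicate t 2)
    = -2 * ∑ k ∈ Icc 1 n, (-1:ℚ)^k / (k:ℚ)^(2*t) * g n k := by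
  intro t
  induction t with
  | zero =>
      intro n hn
      have h1 : Hstar n (List.replicate 0 2) = 1 := rfl
      have h2 : ∑ k ∈ Icc 1 n, (-1:ℚ)^k / (k:ℚ)^(2*0) * g n k = -(1/2) := by
        rw [← lemB hn]
        refine Finset.sum_congr rfl fun k hk => ?_
        norm_num
      rw [h1, h2]; norm_num
  | succ t ih =>
      intro n hn
      have hrep : List.replicate (t+1) (2:ℤ) = (2:ℤ) :: List.replicate t 2 := rfl
      have ha : aSgn 2 = 1 := by unfold aSgn; norm_num
      rw [hrep]
      show (∑ k ∈ Icc 1 n, aSgn 2 ^ k / (k:ℚ)^((2:ℤ).natAbs) * Hstar k (List.replicate t 2)) = _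
      have step1 : ∀ k ∈ Icc 1 n,
          aSgn 2 ^ k / (k:ℚ)^((2:ℤ).natAbs) * Hstar k (List.replicate t 2)
          = ∑ i ∈ Icc 1 k, (-2) * ((1/(k:ℚ)^2) * ((-1:ℚ)^i / (i:ℚ)^(2*t) * g k i)) := by
        intro k hk
        rw [Finset.mem_Icc] at hk
        rw [ha, one_pow, ih k hk.1, ← Finset.mul_sum, ← Finset.mul_sum]
        show (1:ℚ) / (k:ℚ)^2 * (-2 * _) = -2 * ((1:ℚ)/(k:ℚ)^2 * _)
        ring
      rw [Finset.sum_congr rfl step1]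
      rw [Finset.sum_comm' (t := fun k => Icc 1 k) (t' := Icc 1 n) (s' := fun i => Icc i n)
        (fun x y => by simp only [Finset.mem_Icc]; omega)]
      rw [Finset.mul_sum]
      refine Finset.sum_congr rfl fun i hi => ?_
      rw [Finset.mem_Icc] at hi
      have hi0 : ((i:ℚ)) ≠ 0 := by
        have := hi.1; positivity
      have hTT := lemT hi.1 n hi.2
      calc ∑ k ∈ Icc i n, (-2) * ((1/(k:ℚ)^2) * ((-1:ℚ)^i / (i:ℚ)^(2*t) * g k i))
          = (-2) * ((-1:ℚ)^i / (i:ℚ)^(2*t)) * ∑ k ∈ Icc i n, (1/(k:ℚ)^2) * g k i := by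
            rw [Finset.mul_sum]
            exact Finset.sum_congr rfl fun k _ => by ring
        _ = (-2) * ((-1:ℚ)^i / (i:ℚ)^(2*t)) * (g n i / (i:ℚ)^2) := by rw [hTT]
        _ = -2 * ((-1:ℚ)^i / (i:ℚ)^(2*(t+1)) * g n i) := by
            have : (i:ℚ)^(2*(t+1)) = (i:ℚ)^(2*t) * (i:ℚ)^2 := by
              rw [← pow_add]; ring_nf
            rw [this]
            field_simp

end Aux5

theorem stmt5 (n t : ℕ) (hn : 1 ≤ n) (ht : 1 ≤ t) :
    Hstar n (List.replicate t 2)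
      = -2 * ∑ k ∈ Finset.Icc 1 n,
          (-1 : ℚ) ^ k * (n.choose k) / ((k : ℚ) ^ (2*t) * ((n+k).choose k)) := by
  rw [Aux5.key t n hn]
  congr 1
  refine Finset.sum_congr rfl fun k hk => ?_
  unfold Aux5.g
  rw [div_mul_div_comm]
end

section
/- Let n ≥ 1, a ≥ 1 be integers, let v be a tuple of nonzero integers, and let H_{k-1} denote alternating multiple harmonic sums. Then n·∑_{k=1}^{n} H_{k-1}(v)·(-1)^k·C(n,k)/(k^a·C(n+k,k)) = ∑_{k=1}^{n} H_{k-1}(v)·(-1)^k·C(n,k)/(k^{a-1}·C(n+k,k)) + 2·∑_{k=1}^{n} H_{k-1}(-a, v)·k·C(n,k)/C(n+k,k), where (-a, v) denotes the tuple with the negative argument -a prepended to v. -/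
open Finset

lemma key (n : ℕ) : ∀ d j, j + d = n →
    ∑ k ∈ Icc (j+1) n, (k : ℚ) * (n.choose k) / ((n+k).choose k)
      = ((n : ℚ) - j) / 2 * (n.choose j) / ((n+j).choose j) := by
  intro d
  induction d with
  | zero =>
    intro j hj
    subst hj
    rw [Finset.Icc_eq_empty (by omega)]
    simp
  | succ d ih =>
    intro j hj
    have hins : Icc (j+1) n = insert (j+1) (Icc (j+2) n) := by
      ext x; simp; omega
    rw [hins, Finset.sum_insert (by simp), ih (j+1) (by omega)]
    have hjn : j ≤ n := by omega
    have hc1 : ((j:ℚ)+1) * (n.choose (j+1)) = ((n:ℚ) - j) * (n.choose j) := by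
      have h := Nat.choose_succ_right_eq n j
      have h2 := congrArg (fun x : ℕ => (x:ℚ)) h
      push_cast [Nat.cast_sub hjn] at h2
      linarith
    have hc2 : ((n:ℚ)+j+1) * ((n+j).choose j) = ((j:ℚ)+1) * ((n+j+1).choose (j+1)) := by
      have h := Nat.add_one_mul_choose_eq (n+j) j
      have h2 := congrArg (fun x : ℕ => (x:ℚ)) h
      push_cast at h2
      linarith
    have hd1 : (((n+j).choose j : ℚ)) ≠ 0 := by
      exact_mod_cast (Nat.choose_pos (by omega)).ne'
    have hd2 : (((n+j+1).choose (j+1) : ℚ)) ≠ 0 := by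
      exact_mod_cast (Nat.choose_pos (by omega)).ne'
    have he : n + (j+1) = n + j + 1 := by omega
    rw [he]
    push_cast
    field_simp

    linear_combination ((n.choose (j+1) : ℕ) : ℚ) * hc2 + (((n+j+1).choose (j+1) : ℕ) : ℚ) * hc1

theorem stmt8 (n a : ℕ) (hn : 1 ≤ n) (ha : 1 ≤ a) (v : List ℤ) (hv : ∀ s ∈ v, s ≠ 0) :
    (n : ℚ) * ∑ k ∈ Finset.Icc 1 n,
        Hh (k-1) v * (-1 : ℚ) ^ k * (n.choose k) / ((k : ℚ) ^ a * ((n+k).choose k))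
      = ∑ k ∈ Finset.Icc 1 n,
          Hh (k-1) v * (-1 : ℚ) ^ k * (n.choose k) / ((k : ℚ) ^ (a-1) * ((n+k).choose k))
        + 2 * ∑ k ∈ Finset.Icc 1 n,
            Hh (k-1) ((-(a : ℤ)) :: v) * (k : ℚ) * (n.choose k) / ((n+k).choose k) := by
  have hHa : ∀ m : ℕ, Hh m ((-(a:ℤ)) :: v)
      = ∑ j ∈ Icc 1 m, (-1:ℚ)^j / (j:ℚ)^a * Hh (j-1) v := by
    intro m
    rw [Hh]
    apply Finset.sum_congr rfl
    intro j _
    have h1 : aSgn (-(a:ℤ)) = -1 := by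
      rw [aSgn, if_neg (by omega)]
    have h2 : (-(a:ℤ)).natAbs = a := by simp
    rw [h1, h2]
  -- rewrite third sum
  have h3 : ∑ k ∈ Icc 1 n, Hh (k-1) ((-(a:ℤ)) :: v) * (k:ℚ) * (n.choose k) / ((n+k).choose k)
      = ∑ j ∈ Icc 1 n, ((-1:ℚ)^j / (j:ℚ)^a * Hh (j-1) v) *
          (((n:ℚ) - j)/2 * (n.choose j) / ((n+j).choose j)) := by
    have step1 : ∀ k ∈ Icc 1 n,
        Hh (k-1) ((-(a:ℤ)) :: v) * (k:ℚ) * (n.choose k) / ((n+k).choose k)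
        = ∑ j ∈ Icc 1 (k-1), ((-1:ℚ)^j / (j:ℚ)^a * Hh (j-1) v) *
            ((k:ℚ) * (n.choose k) / ((n+k).choose k)) := by
      intro k _
      rw [hHa (k-1), Finset.sum_mul, Finset.sum_mul, Finset.sum_div]
      apply Finset.sum_congr rfl
      intro j _
      ring
    rw [Finset.sum_congr rfl step1]
    rw [Finset.sum_comm' (s := Icc 1 n) (t := fun k => Icc 1 (k-1))
        (t' := Icc 1 n) (s' := fun j => Icc (j+1) n) (by intro k j; simp; omega)]
    apply Finset.sum_congr rfl
    intro j hj
    rw [← Finset.mul_sum, key n (n - j) j (by simp at hj; omega)]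
  rw [h3, Finset.mul_sum, Finset.mul_sum, ← Finset.sum_add_distrib]
  apply Finset.sum_congr rfl
  intro j hj
  simp only [mem_Icc] at hj
  have hj0 : (j:ℚ) ≠ 0 := by exact_mod_cast (by omega : j ≠ 0)
  have hd : (((n+j).choose j : ℕ) : ℚ) ≠ 0 := by
    exact_mod_cast (Nat.choose_pos (by omega)).ne'
  have hpow : (j:ℚ)^a = (j:ℚ)^(a-1) * j := by
    conv_lhs => rw [show a = (a-1)+1 by omega]
    rw [pow_succ]
  rw [hpow]
  have hp : (j:ℚ)^(a-1) ≠ 0 := pow_ne_zero _ hj0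
  field_simp
  ring
end

section
/- For all integers n ≥ 1 and a, b ≥ 0, H*_n({2}^b, 3, {2}^a, 1) = 2·∑_{k=1}^{n} C(n,k)/(k^{2(a+b)+4}·C(n+k,k)) + 4·∑_{k=1}^{n} (-1)^k·H_{k-1}(-(2a+2))·C(n,k)/(k^{2b+2}·C(n+k,k)), where H_{k-1}(-(2a+2)) = ∑_{j=1}^{k-1} (-1)^j/j^{2a+2}. -/
open Finset

noncomputable def Rq (n k : ℕ) : ℚ := (n.choose k : ℚ) / ((n+k).choose k : ℚ)

lemma chq_ne (n k : ℕ) : (((n+k).choose k : ℕ) : ℚ) ≠ 0 := by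
  exact_mod_cast (Nat.choose_pos (Nat.le_add_left k n)).ne'

lemma Rq_zero {n k : ℕ} (h : n < k) : Rq n k = 0 := by
  simp [Rq, Nat.choose_eq_zero_of_lt h]

lemma Rq_zero' (n : ℕ) : Rq n 0 = 1 := by simp [Rq]

lemma delta' (n k : ℕ) :
    ((n:ℚ)+1)^2 * Rq n k = (((n:ℚ)+1)^2 - (k:ℚ)^2) * Rq (n+1) k := by
  rcases le_or_gt k (n+1) with hk | hk
  · have h1 : (n.choose k : ℚ) * ((n:ℚ)+1) = ((n+1).choose k : ℚ) * (((n:ℚ)+1) - k) := by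
      have h := congrArg (fun x : ℕ => (x:ℚ)) (Nat.choose_mul_succ_eq n k)
      push_cast [Nat.cast_sub hk] at h
      linear_combination h
    have h2 : (((n+k).choose k : ℕ) : ℚ) * ((n:ℚ)+(k:ℚ)+1) = (((n+1+k).choose k : ℕ) : ℚ) * ((n:ℚ)+1) := by
      have h := congrArg (fun x : ℕ => (x:ℚ)) (Nat.choose_mul_succ_eq (n+k) k)
      have he : n + k + 1 - k = n + 1 := by omega
      rw [he] at h
      have h3 : n + 1 + k = n + k + 1 := by omega
      rw [h3]
      push_cast at h
      linear_combination h
    rw [Rq, Rq]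
    field_simp [chq_ne n k, chq_ne (n+1) k]
    linear_combination (((n:ℚ)+1) * ((n+1+k).choose k : ℚ)) * h1
      - ((((n+1).choose k : ℚ)) * (((n:ℚ)+1) - k)) * h2
  · rw [Rq_zero (by omega), Rq_zero (by omega)]; ring

lemma ratio (n k : ℕ) :
    ((n:ℚ)+(k:ℚ)+1) * Rq n (k+1) = ((n:ℚ)-(k:ℚ)) * Rq n k := by
  rcases le_or_gt (k+1) n with hk | hk
  · have h1 : (n.choose (k+1) : ℚ) * ((k:ℚ)+1) = (n.choose k : ℚ) * ((n:ℚ)-k) := by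
      have h := congrArg (fun x : ℕ => (x:ℚ)) (Nat.choose_succ_right_eq n k)
      push_cast [Nat.cast_sub (by omega : k ≤ n)] at h
      linear_combination h
    have h2 : (((n+k+1).choose (k+1) : ℕ) : ℚ) * ((k:ℚ)+1) = (((n+k).choose k : ℕ) : ℚ) * ((n:ℚ)+(k:ℚ)+1) := by
      have h := congrArg (fun x : ℕ => (x:ℚ)) (Nat.add_one_mul_choose_eq (n+k) k)
      push_cast [Nat.succ_eq_add_one] at h
      linear_combination -h
    have h3 : n + (k+1) = n + k + 1 := by omega
    have hk1 : ((k:ℚ)+1) ≠ 0 := by positivity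
    apply mul_left_cancel₀ hk1
    rw [Rq, Rq, h3]
    field_simp [chq_ne n k, show (((n+k+1).choose (k+1) : ℕ) : ℚ) ≠ 0 from by
      exact_mod_cast (Nat.choose_pos (by omega)).ne']
    linear_combination ((((n+k+1).choose (k+1) : ℕ) : ℚ)) * h1
      - ((n.choose (k+1) : ℚ)) * h2
  · rcases Nat.lt_or_ge n k with h | h
    · rw [Rq_zero (by omega), Rq_zero (by omega)]; ring
    · have : n = k := by omega
      subst this
      rw [Rq_zero (by omega)]
      simp

lemma Rq_zero'' (n : ℕ) : Rq n 0 = 1 := by simp [Rq]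

lemma sum_Icc_bot {M : Type*} [AddCommMonoid M] {a b : ℕ} (h : a ≤ b) (f : ℕ → M) :
    ∑ j ∈ Icc a b, f j = f a + ∑ j ∈ Icc (a+1) b, f j := by
  rw [show Icc a b = insert a (Icc (a+1) b) from by
    ext x; simp [Finset.mem_Icc, Finset.mem_insert]; omega]
  exact Finset.sum_insert (by simp only [Finset.mem_Icc, not_and, not_le]; omega)

lemma lemA (n : ℕ) : ∀ d k, k + d = n →
    (2*(n:ℚ)) * ∑ j ∈ Icc (k+1) n, (-1:ℚ)^j * Rq n j
      = (-1:ℚ)^k * Rq n k * ((k:ℚ) - (n:ℚ)) := by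
  intro d
  induction d with
  | zero =>
    intro k hk
    subst hk
    rw [Finset.Icc_eq_empty (by omega)]
    simp
  | succ d ih =>
    intro k hk
    have ihh := ih (k+1) (by omega)
    rw [sum_Icc_bot (by omega)]
    push_cast at ihh ⊢
    linear_combination ihh + ((-1:ℚ)^(k+1)) * ratio n k

lemma lemB (n : ℕ) : ∀ d k, k + d = n →
    2 * ∑ j ∈ Icc (k+1) n, (j:ℚ) * Rq n j = Rq n k * ((n:ℚ) - (k:ℚ)) := by
  intro d
  induction d with
  | zero =>
    intro k hk
    subst hk
    rw [Finset.Icc_eq_empty (by omega)]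
    simp
  | succ d ih =>
    intro k hk
    have ihh := ih (k+1) (by omega)
    rw [sum_Icc_bot (by omega)]
    push_cast at ihh ⊢
    linear_combination ihh + ratio n k

lemma lemT (k : ℕ) (hk : 1 ≤ k) : ∀ n, ∑ m ∈ Icc k n, Rq m k / (m:ℚ)^2 = Rq n k / (k:ℚ)^2 := by
  intro n
  induction n with
  | zero =>
    rw [Finset.Icc_eq_empty (by omega), Rq_zero (by omega)]
    simp
  | succ n ih =>
    rcases le_or_gt k (n+1) with h | h
    · rw [Finset.sum_Icc_succ_top h, ih]
      have hk0 : ((k:ℚ)) ≠ 0 := by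
        exact_mod_cast (by omega : k ≠ 0)
      have hn0 : ((n:ℚ)+1) ≠ 0 := by positivity
      have hd := delta' n k
      push_cast
      field_simp
      linear_combination hd
    · rw [Finset.Icc_eq_empty (by omega), Rq_zero (by omega)]
      simp

lemma lemT3 (k : ℕ) (hk : 1 ≤ k) : ∀ n, ∑ m ∈ Icc k n, Rq m k / (m:ℚ)^3
    = Rq n k / (k:ℚ)^3
      + (2*(-1:ℚ)^k/(k:ℚ)) * ∑ j ∈ Icc (k+1) n, (-1:ℚ)^j * Rq n j / (j:ℚ)^2 := by
  intro n
  induction n with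
  | zero =>
    rw [Finset.Icc_eq_empty (by omega), Finset.Icc_eq_empty (by omega), Rq_zero (by omega)]
    simp
  | succ n ih =>
    rcases lt_trichotomy k (n+1) with h | h | h
    · have h' : k ≤ n := by omega
      have hk0 : ((k:ℚ)) ≠ 0 := by exact_mod_cast (by omega : k ≠ 0)
      have hn0 : ((n:ℚ)+1) ≠ 0 := by positivity
      have hterm : ∀ j ∈ Icc (k+1) n, (-1:ℚ)^j * Rq n j / (j:ℚ)^2
          = (-1:ℚ)^j * Rq (n+1) j / (j:ℚ)^2 - (-1:ℚ)^j * Rq (n+1) j / ((n:ℚ)+1)^2 := by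
        intro j hj
        simp only [Finset.mem_Icc] at hj
        have hj0 : ((j:ℚ)) ≠ 0 := by exact_mod_cast (by omega : j ≠ 0)
        have hd : Rq n j = (((n:ℚ)+1)^2 - (j:ℚ)^2) * Rq (n+1) j / ((n:ℚ)+1)^2 := by
          field_simp
          linear_combination delta' n j
        rw [hd]
        field_simp
      have hS : (∑ j ∈ Icc (k+1) n, (-1:ℚ)^j * Rq n j / (j:ℚ)^2)
          = (∑ j ∈ Icc (k+1) (n+1), (-1:ℚ)^j * Rq (n+1) j / (j:ℚ)^2)
            - (∑ j ∈ Icc (k+1) (n+1), (-1:ℚ)^j * Rq (n+1) j) / ((n:ℚ)+1)^2 := by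
        rw [Finset.sum_congr rfl hterm, Finset.sum_sub_distrib]
        rw [Finset.sum_Icc_succ_top (show k+1 ≤ n+1 from by omega)
          (fun j => (-1:ℚ)^j * Rq (n+1) j / (j:ℚ)^2)]
        rw [Finset.sum_Icc_succ_top (show k+1 ≤ n+1 from by omega)
          (fun j => (-1:ℚ)^j * Rq (n+1) j)]
        rw [show (∑ j ∈ Icc (k+1) n, (-1:ℚ)^j * Rq (n+1) j / ((n:ℚ)+1)^2)
            = (∑ j ∈ Icc (k+1) n, (-1:ℚ)^j * Rq (n+1) j) / ((n:ℚ)+1)^2 from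
          (Finset.sum_div _ _ _).symm]
        push_cast
        ring
      rw [Finset.sum_Icc_succ_top (show k ≤ n+1 from by omega), ih, hS]
      have hA := lemA (n+1) (n+1-k) k (by omega)
      push_cast at hA
      have hs : Rq n k = (((n:ℚ)+1)^2 - (k:ℚ)^2) * Rq (n+1) k / ((n:ℚ)+1)^2 := by
        field_simp
        linear_combination delta' n k
      rcases Nat.even_or_odd k with hp | hp
      · simp only [hp.neg_one_pow] at hA ⊢
        have hS0 : (∑ j ∈ Icc (k+1) (n+1), (-1:ℚ)^j * Rq (n+1) j)
            = Rq (n+1) k * ((k:ℚ) - ((n:ℚ)+1)) / (2*((n:ℚ)+1)) := by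
          field_simp
          linear_combination hA
        rw [hs, hS0]
        push_cast
        field_simp
        ring
      · simp only [hp.neg_one_pow] at hA ⊢
        have hS0 : (∑ j ∈ Icc (k+1) (n+1), (-1:ℚ)^j * Rq (n+1) j)
            = -(Rq (n+1) k * ((k:ℚ) - ((n:ℚ)+1)) / (2*((n:ℚ)+1))) := by
          field_simp
          linear_combination hA
        rw [hs, hS0]
        push_cast
        field_simp
        ring
    · subst h
      rw [Finset.Icc_self, Finset.sum_singleton, Finset.Icc_eq_empty (by omega)]
      simp
    · rw [Finset.Icc_eq_empty (by omega), Finset.Icc_eq_empty (by omega), Rq_zero (by omega)]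
      simp

lemma swap1 (m : ℕ) (f : ℕ → ℕ → ℚ) :
    ∑ i ∈ Icc 1 m, ∑ k ∈ Icc 1 i, f i k = ∑ k ∈ Icc 1 m, ∑ i ∈ Icc k m, f i k := by
  apply Finset.sum_comm'
  intro x y
  simp only [Finset.mem_Icc]
  omega

lemma swap2_s10 (n : ℕ) (g : ℕ → ℕ → ℚ) :
    ∑ k ∈ Icc 1 n, ∑ j ∈ Icc (k+1) n, g k j = ∑ j ∈ Icc 1 n, ∑ k ∈ Icc 1 (j-1), g k j := by
  apply Finset.sum_comm'
  intro x y
  simp only [Finset.mem_Icc]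
  omega

lemma lemC0 : ∀ m : ℕ, ∑ j ∈ Icc 1 m, 1/(j:ℚ) = 2 * ∑ k ∈ Icc 1 m, Rq m k / (k:ℚ) := by
  intro m
  induction m with
  | zero => simp
  | succ m ih =>
    have hm0 : ((m:ℚ)+1) ≠ 0 := by positivity
    have hterm : ∀ k ∈ Icc 1 (m+1), Rq (m+1) k / (k:ℚ)
        = Rq m k / (k:ℚ) + (k:ℚ) * Rq (m+1) k / ((m:ℚ)+1)^2 := by
      intro k hk
      simp only [Finset.mem_Icc] at hk
      have hk0 : ((k:ℚ)) ≠ 0 := by exact_mod_cast (by omega : k ≠ 0)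
      have hd : Rq m k = (((m:ℚ)+1)^2 - (k:ℚ)^2) * Rq (m+1) k / ((m:ℚ)+1)^2 := by
        field_simp
        linear_combination delta' m k
      rw [hd]
      field_simp
      ring
    have hB := lemB (m+1) (m+1) 0 (by omega)
    rw [Rq_zero' (m+1)] at hB
    push_cast at hB
    rw [Finset.sum_Icc_succ_top (show (1:ℕ) ≤ m+1 from by omega), ih]
    rw [Finset.sum_congr rfl hterm, Finset.sum_add_distrib]
    rw [Finset.sum_Icc_succ_top (show (1:ℕ) ≤ m+1 from by omega) (fun k => Rq m k / (k:ℚ))]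
    rw [Rq_zero (show m < m+1 from by omega)]
    rw [show (∑ k ∈ Icc 1 (m+1), (k:ℚ) * Rq (m+1) k / ((m:ℚ)+1)^2)
        = (∑ k ∈ Icc 1 (m+1), (k:ℚ) * Rq (m+1) k) / ((m:ℚ)+1)^2 from (Finset.sum_div _ _ _).symm]
    push_cast
    field_simp
    linear_combination (-1:ℚ) * hB

lemma Hstar_cons (n : ℕ) (s : ℤ) (r : List ℤ) :
    Hstar n (s :: r) = ∑ k ∈ Icc 1 n, aSgn s ^ k / (k:ℚ)^s.natAbs * Hstar k r := rfl

lemma Hstar_two (n : ℕ) (r : List ℤ) :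
    Hstar n ((2:ℤ) :: r) = ∑ k ∈ Icc 1 n, (1/(k:ℚ)^2) * Hstar k r := by
  rw [Hstar_cons]
  refine Finset.sum_congr rfl fun k _ => ?_
  norm_num [aSgn]

lemma Hstar_three (n : ℕ) (r : List ℤ) :
    Hstar n ((3:ℤ) :: r) = ∑ k ∈ Icc 1 n, (1/(k:ℚ)^3) * Hstar k r := by
  rw [Hstar_cons]
  refine Finset.sum_congr rfl fun k _ => ?_
  norm_num [aSgn]

lemma lemC : ∀ a (m : ℕ), Hstar m (List.replicate a 2 ++ [1])
    = 2 * ∑ k ∈ Icc 1 m, Rq m k / (k:ℚ)^(2*a+1) := by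
  intro a
  induction a with
  | zero =>
    intro m
    simp only [List.replicate_zero, List.nil_append]
    rw [Hstar_cons]
    rw [Finset.sum_congr rfl (fun k _ => by norm_num [aSgn, Hstar] : ∀ k ∈ Icc 1 m,
      aSgn 1 ^ k / (k:ℚ)^(1:ℤ).natAbs * Hstar k [] = 1/(k:ℚ))]
    rw [lemC0 m]
    norm_num
  | succ a ih =>
    intro m
    rw [show List.replicate (a+1) (2:ℤ) ++ [1] = (2:ℤ) :: (List.replicate a 2 ++ [1]) from by
      simp [List.replicate_succ]]
    rw [Hstar_two]
    rw [Finset.sum_congr rfl (fun i _ => by rw [ih i])]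
    simp only [Finset.mul_sum]
    have hmm : ∀ i ∈ Icc 1 m, ∀ k ∈ Icc 1 i,
        (1:ℚ)/(i:ℚ)^2 * (2 * (Rq i k / (k:ℚ)^(2*a+1)))
          = 2 * (Rq i k/(i:ℚ)^2) / (k:ℚ)^(2*a+1) := fun i _ k _ => by ring
    rw [Finset.sum_congr rfl (fun i hi => Finset.sum_congr rfl (hmm i hi))]
    rw [swap1 m (fun i k => 2 * (Rq i k/(i:ℚ)^2) / (k:ℚ)^(2*a+1))]
    have hkk : ∀ k ∈ Icc 1 m, ∑ i ∈ Icc k m, 2*(Rq i k/(i:ℚ)^2)/(k:ℚ)^(2*a+1)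
        = 2 * (Rq m k / (k:ℚ)^(2*(a+1)+1)) := by
      intro k hk
      simp only [Finset.mem_Icc] at hk
      have hk0 : ((k:ℚ)) ≠ 0 := by exact_mod_cast (by omega : k ≠ 0)
      have h1 : ∑ i ∈ Icc k m, Rq i k/(i:ℚ)^2 = Rq m k/(k:ℚ)^2 := lemT k hk.1 m
      calc ∑ i ∈ Icc k m, 2*(Rq i k/(i:ℚ)^2)/(k:ℚ)^(2*a+1)
          = (2/(k:ℚ)^(2*a+1)) * ∑ i ∈ Icc k m, Rq i k/(i:ℚ)^2 := by
            rw [Finset.mul_sum]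
            exact Finset.sum_congr rfl (fun i _ => by ring)
        _ = (2/(k:ℚ)^(2*a+1)) * (Rq m k/(k:ℚ)^2) := by rw [h1]
        _ = 2 * (Rq m k / (k:ℚ)^(2*(a+1)+1)) := by
            rw [show 2*(a+1)+1 = (2*a+1)+2 from by ring, pow_add,
              div_mul_div_comm, mul_div_assoc]
            ring
    rw [Finset.sum_congr rfl hkk, ← Finset.mul_sum]

noncomputable def hq (a m : ℕ) : ℚ := ∑ j ∈ Icc 1 m, (-1:ℚ)^j/(j:ℚ)^(2*a+2)

lemma lemP (a : ℕ) : ∀ n, Hstar n ((3:ℤ) :: (List.replicate a 2 ++ [1]))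
    = 2 * ∑ k ∈ Icc 1 n, Rq n k / (k:ℚ)^(2*a+4)
      + 4 * ∑ k ∈ Icc 1 n, (-1:ℚ)^k * hq a (k-1) * Rq n k / (k:ℚ)^2 := by
  intro n
  rw [Hstar_three]
  rw [Finset.sum_congr rfl (fun m _ => by rw [lemC a m])]
  simp only [Finset.mul_sum]
  have hmm : ∀ i ∈ Icc 1 n, ∀ k ∈ Icc 1 i,
      (1:ℚ)/(i:ℚ)^3 * (2 * (Rq i k / (k:ℚ)^(2*a+1)))
        = 2 * (Rq i k/(i:ℚ)^3) / (k:ℚ)^(2*a+1) := fun i _ k _ => by ring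
  rw [Finset.sum_congr rfl (fun i hi => Finset.sum_congr rfl (hmm i hi))]
  rw [swap1 n (fun i k => 2 * (Rq i k/(i:ℚ)^3) / (k:ℚ)^(2*a+1))]
  have hkk : ∀ k ∈ Icc 1 n, ∑ i ∈ Icc k n, 2*(Rq i k/(i:ℚ)^3)/(k:ℚ)^(2*a+1)
      = 2 * (Rq n k/(k:ℚ)^(2*a+4))
        + ∑ j ∈ Icc (k+1) n, (4*(-1:ℚ)^k/(k:ℚ)^(2*a+2)) * ((-1:ℚ)^j * Rq n j / (j:ℚ)^2) := by
    intro k hk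
    simp only [Finset.mem_Icc] at hk
    have hk0 : ((k:ℚ)) ≠ 0 := by exact_mod_cast (by omega : k ≠ 0)
    have h1 := lemT3 k hk.1 n
    calc ∑ i ∈ Icc k n, 2*(Rq i k/(i:ℚ)^3)/(k:ℚ)^(2*a+1)
        = (2/(k:ℚ)^(2*a+1)) * ∑ i ∈ Icc k n, Rq i k/(i:ℚ)^3 := by
          rw [Finset.mul_sum]
          exact Finset.sum_congr rfl (fun i _ => by ring)
      _ = (2/(k:ℚ)^(2*a+1)) * (Rq n k / (k:ℚ)^3
            + (2*(-1:ℚ)^k/(k:ℚ)) * ∑ j ∈ Icc (k+1) n, (-1:ℚ)^j * Rq n j / (j:ℚ)^2) := by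
          rw [h1]
      _ = 2 * (Rq n k/(k:ℚ)^(2*a+4))
            + (4*(-1:ℚ)^k/(k:ℚ)^(2*a+2)) * ∑ j ∈ Icc (k+1) n, (-1:ℚ)^j * Rq n j / (j:ℚ)^2 := by
          rw [show 2*a+4 = (2*a+1)+3 from by ring, pow_add,
              show 2*a+2 = (2*a+1)+1 from by ring, pow_add, pow_one]
          field_simp
          ring
      _ = _ := by rw [Finset.mul_sum]
  rw [Finset.sum_congr rfl hkk, Finset.sum_add_distrib, ← Finset.mul_sum]
  rw [swap2_s10 n (fun k j => (4*(-1:ℚ)^k/(k:ℚ)^(2*a+2)) * ((-1:ℚ)^j * Rq n j/(j:ℚ)^2))]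
  have hjj : ∀ j ∈ Icc 1 n, ∑ k ∈ Icc 1 (j-1),
        (4*(-1:ℚ)^k/(k:ℚ)^(2*a+2)) * ((-1:ℚ)^j * Rq n j/(j:ℚ)^2)
          = 4 * ((-1:ℚ)^j * hq a (j-1) * Rq n j/(j:ℚ)^2) := by
      intro j hj
      rw [← Finset.sum_mul]
      rw [show (∑ k ∈ Icc 1 (j-1), 4*(-1:ℚ)^k/(k:ℚ)^(2*a+2)) = 4 * hq a (j-1) from by
        rw [hq, Finset.mul_sum]
        exact Finset.sum_congr rfl (fun x _ => by ring)]
      ring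
  rw [Finset.sum_congr rfl hjj, ← Finset.mul_sum]

lemma stepHelper (n : ℕ) (c : ℕ → ℚ) :
    ∑ i ∈ Icc 1 n, (1/(i:ℚ)^2) * ∑ k ∈ Icc 1 i, c k * Rq i k
      = ∑ k ∈ Icc 1 n, c k * (Rq n k / (k:ℚ)^2) := by
  simp only [Finset.mul_sum]
  have hmm : ∀ i ∈ Icc 1 n, ∀ k ∈ Icc 1 i,
      (1:ℚ)/(i:ℚ)^2 * (c k * Rq i k) = c k * (Rq i k/(i:ℚ)^2) := fun i _ k _ => by ring
  rw [Finset.sum_congr rfl (fun i hi => Finset.sum_congr rfl (hmm i hi))]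
  rw [swap1 n (fun i k => c k * (Rq i k/(i:ℚ)^2))]
  refine Finset.sum_congr rfl fun k hk => ?_
  simp only [Finset.mem_Icc] at hk
  rw [← Finset.mul_sum, lemT k hk.1 n]

lemma lemMain (b a : ℕ) : ∀ n, Hstar n (List.replicate b 2 ++ [3] ++ List.replicate a 2 ++ [1])
    = 2 * ∑ k ∈ Icc 1 n, Rq n k / (k:ℚ)^(2*(a+b)+4)
      + 4 * ∑ k ∈ Icc 1 n, (-1:ℚ)^k * hq a (k-1) * Rq n k / (k:ℚ)^(2*b+2) := by
  induction b with
  | zero =>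
    intro n
    have hl : List.replicate 0 (2:ℤ) ++ [3] ++ List.replicate a 2 ++ [1]
        = (3:ℤ) :: (List.replicate a 2 ++ [1]) := by simp
    rw [hl]
    exact lemP a n
  | succ b ih =>
    intro n
    have hl : List.replicate (b+1) (2:ℤ) ++ [3] ++ List.replicate a 2 ++ [1]
        = (2:ℤ) :: (List.replicate b 2 ++ [3] ++ List.replicate a 2 ++ [1]) := by
      simp [List.replicate_succ]
    rw [hl, Hstar_two]
    have h1 : ∀ m ∈ Icc 1 n, (1/(m:ℚ)^2) * Hstar m (List.replicate b 2 ++ [3] ++ List.replicate a 2 ++ [1])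
        = (1/(m:ℚ)^2) * ∑ k ∈ Icc 1 m, (2/(k:ℚ)^(2*(a+b)+4)) * Rq m k
          + (1/(m:ℚ)^2) * ∑ k ∈ Icc 1 m, (4*(-1:ℚ)^k*hq a (k-1)/(k:ℚ)^(2*b+2)) * Rq m k := by
      intro m _
      rw [ih m]
      simp only [Finset.mul_sum, mul_add]
      congr 1 <;> exact Finset.sum_congr rfl fun k _ => by ring
    rw [Finset.sum_congr rfl h1, Finset.sum_add_distrib, stepHelper n _, stepHelper n _]
    have e1 : ∀ k ∈ Icc 1 n, (2/(k:ℚ)^(2*(a+b)+4)) * (Rq n k/(k:ℚ)^2)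
        = 2*(Rq n k/(k:ℚ)^(2*(a+(b+1))+4)) := by
      intro k hk
      rw [show 2*(a+(b+1))+4 = (2*(a+b)+4)+2 from by ring, pow_add,
        div_mul_div_comm, mul_div_assoc]
      ring
    have e2 : ∀ k ∈ Icc 1 n, (4*(-1:ℚ)^k*hq a (k-1)/(k:ℚ)^(2*b+2)) * (Rq n k/(k:ℚ)^2)
        = 4*((-1:ℚ)^k * hq a (k-1) * Rq n k/(k:ℚ)^(2*(b+1)+2)) := by
      intro k hk
      rw [show 2*(b+1)+2 = (2*b+2)+2 from by ring, pow_add,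
        div_mul_div_comm, mul_div_assoc]
      ring
    rw [Finset.sum_congr rfl e1, ← Finset.mul_sum, Finset.sum_congr rfl e2, ← Finset.mul_sum]

lemma Hh_single_s10 (a m : ℕ) : Hh m [-(2*(a:ℤ)+2)] = hq a m := by
  rw [show Hh m [-(2*(a:ℤ)+2)]
      = ∑ j ∈ Icc 1 m, aSgn (-(2*(a:ℤ)+2)) ^ j / (j:ℚ)^(-(2*(a:ℤ)+2)).natAbs * Hh (j-1) []
    from rfl, hq]
  refine Finset.sum_congr rfl fun j _ => ?_
  have h1 : aSgn (-(2*(a:ℤ)+2)) = -1 := by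
    rw [aSgn, if_neg]
    omega
  have h2 : (-(2*(a:ℤ)+2)).natAbs = 2*a+2 := by
    rw [show -(2*(a:ℤ)+2) = -((2*a+2 : ℕ):ℤ) from by push_cast; ring,
      Int.natAbs_neg, Int.natAbs_natCast]
  rw [h1, h2, show Hh (j-1) [] = 1 from rfl, mul_one]


theorem stmt10 (n a b : ℕ) (hn : 1 ≤ n) :
    Hstar n (List.replicate b 2 ++ [3] ++ List.replicate a 2 ++ [1])
      = 2 * ∑ k ∈ Finset.Icc 1 n,
            (n.choose k : ℚ) / ((k : ℚ) ^ (2*(a+b)+4) * ((n+k).choose k))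
        + 4 * ∑ k ∈ Finset.Icc 1 n,
            (-1 : ℚ) ^ k * Hh (k-1) [-(2 * (a : ℤ) + 2)] * (n.choose k)
              / ((k : ℚ) ^ (2*b+2) * ((n+k).choose k)) := by
  rw [lemMain b a n]
  congr 1
  · refine congrArg _ (Finset.sum_congr rfl fun k hk => ?_)
    rw [Rq, div_div, mul_comm (((n+k).choose k : ℕ):ℚ) _]
  · refine congrArg _ (Finset.sum_congr rfl fun k hk => ?_)
    rw [Hh_single_s10 a (k-1), Rq]
    ring
end
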